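/- arXiv:2007.05348 — 8 statements merged into one kernel-verified Lean document; each statement's English description precedes it below -/
import Mathlib

section
/- Let I be a finite set of cardinality k ≥ 1 and let Z ⊆ I × I. Let M be the I × I matrix over the multivariate polynomial ring ℚ[x_{ij} : (i,j) ∈ I × I] defined by M i j = x_{ij} if (i,j) ∈ Z and M i j = 0 otherwise, and assume det(M) ≠ 0. Then det(M) is an irreducible polynomial if and only if M is combinatorially irreducible, i.e., there do not exist nonempty proper subsets R ⊆ I and C ⊆ I with |R| + |C| = k such that M r c = 0 for all r ∈ R and c ∈ C (equivalently, no pair of row and column permutations brings M into a nontrivial block upper triangular form with two square diagonal blocks and a zero block below the diagonal). -/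
set_option linter.unusedSectionVars false

open MvPolynomial Finset

namespace FrobKonig

variable {σ : Type} (w : σ → ℕ)

noncomputable def phiW : MvPolynomial σ ℚ →+* Polynomial (MvPolynomial σ ℚ) :=
  MvPolynomial.eval₂Hom (Polynomial.C.comp MvPolynomial.C)
    (fun v => Polynomial.C (MvPolynomial.X v) * Polynomial.X ^ w v)

lemma phiW_monomial (m : σ →₀ ℕ) (r : ℚ) :
    phiW w (monomial m r) =
      Polynomial.C (monomial m r) * Polynomial.X ^ (Finsupp.weight w m : ℕ) := by
  classical
  show eval₂ _ _ _ = _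
  rw [eval₂_monomial]
  have h1 : (m.prod fun v e => (Polynomial.C (MvPolynomial.X v (R := ℚ)) * Polynomial.X ^ w v) ^ e)
      = Polynomial.C (m.prod fun v e => (MvPolynomial.X v (R := ℚ)) ^ e)
        * Polynomial.X ^ (Finsupp.weight w m : ℕ) := by
    rw [Finsupp.prod, Finsupp.prod, map_prod]
    rw [Finsupp.weight_apply, Finsupp.sum, ← Finset.prod_pow_eq_pow_sum,
      ← Finset.prod_mul_distrib]
    apply Finset.prod_congr rfl
    intro v _
    rw [mul_pow, map_pow, smul_eq_mul, mul_comm (m v) (w v), pow_mul]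
  rw [h1, monomial_eq, map_mul]
  simp only [RingHom.coe_comp, Function.comp_apply]
  ring

lemma phiW_leftInv (p : MvPolynomial σ ℚ) :
    Polynomial.eval 1 (phiW w p) = p := by
  have h : (Polynomial.evalRingHom (1 : MvPolynomial σ ℚ)).comp (phiW w) =
      RingHom.id (MvPolynomial σ ℚ) := by
    apply MvPolynomial.ringHom_ext
    · intro a
      simp [phiW]
    · intro v
      simp [phiW]
  exact RingHom.congr_fun h p

lemma phiW_ne_zero {p : MvPolynomial σ ℚ} (hp : p ≠ 0) : phiW w p ≠ 0 := by
  intro h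
  apply hp
  rw [← phiW_leftInv w p, h, Polynomial.eval_zero]

lemma coeff_coeff_phiW (p : MvPolynomial σ ℚ) (m : σ →₀ ℕ) (t : ℕ) :
    MvPolynomial.coeff m ((phiW w p).coeff t)
      = if (Finsupp.weight w m : ℕ) = t then MvPolynomial.coeff m p else 0 := by
  classical
  induction p using MvPolynomial.induction_on' with
  | monomial m' r =>
    rw [phiW_monomial, Polynomial.coeff_C_mul, Polynomial.coeff_X_pow]
    by_cases h : m' = m
    · subst h
      split_ifs with h1 h2 h3 <;>
        simp_all [MvPolynomial.coeff_monomial, mul_ite]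
    · split_ifs with h1 h2 h3 <;>
        simp_all [MvPolynomial.coeff_monomial, mul_ite, Ne.symm h]
  | add p q hp hq =>
    rw [map_add, Polynomial.coeff_add, MvPolynomial.coeff_add, hp, hq,
      MvPolynomial.coeff_add]
    split_ifs <;> simp

lemma phiW_of_hom {p : MvPolynomial σ ℚ} {e : ℕ} (hp : IsWeightedHomogeneous w p e) :
    phiW w p = Polynomial.C p * Polynomial.X ^ e := by
  have step : ∀ m ∈ p.support, phiW w (monomial m (MvPolynomial.coeff m p))
      = Polynomial.C (monomial m (MvPolynomial.coeff m p)) * Polynomial.X ^ e := by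
    intro m hm
    rw [phiW_monomial, hp (MvPolynomial.mem_support_iff.mp hm)]
  calc phiW w p = ∑ m ∈ p.support, phiW w (monomial m (MvPolynomial.coeff m p)) := by
        rw [← map_sum, support_sum_monomial_coeff]
    _ = ∑ m ∈ p.support,
        Polynomial.C (monomial m (MvPolynomial.coeff m p)) * Polynomial.X ^ e :=
        Finset.sum_congr rfl step
    _ = Polynomial.C p * Polynomial.X ^ e := by
        rw [← Finset.sum_mul, ← map_sum, support_sum_monomial_coeff]

lemma factor_hom {f g : MvPolynomial σ ℚ} {d : ℕ} (hf : f ≠ 0) (hg : g ≠ 0)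
    (h : IsWeightedHomogeneous w (f * g) d) :
    ∃ a b : ℕ, a + b = d ∧ IsWeightedHomogeneous w f a ∧ IsWeightedHomogeneous w g b := by
  classical
  have hF : phiW w f ≠ 0 := phiW_ne_zero w hf
  have hG : phiW w g ≠ 0 := phiW_ne_zero w hg
  have hfg0 : f * g ≠ 0 := mul_ne_zero hf hg
  have hFG : phiW w f * phiW w g = Polynomial.C (f * g) * Polynomial.X ^ d := by
    rw [← map_mul, phiW_of_hom w h]
  have hnd : (Polynomial.C (f * g) * Polynomial.X ^ d).natDegree = d := by
    rw [Polynomial.C_mul_X_pow_eq_monomial, Polynomial.natDegree_monomial, if_neg hfg0]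
  have hntd : (Polynomial.C (f * g) * Polynomial.X ^ d).natTrailingDegree = d := by
    rw [Polynomial.C_mul_X_pow_eq_monomial, Polynomial.natTrailingDegree_monomial hfg0]
  have h1 : (phiW w f).natDegree + (phiW w g).natDegree = d := by
    rw [← Polynomial.natDegree_mul hF hG, hFG, hnd]
  have h2 : (phiW w f).natTrailingDegree + (phiW w g).natTrailingDegree = d := by
    rw [← Polynomial.natTrailingDegree_mul hF hG, hFG, hntd]
  have e1 := Polynomial.natTrailingDegree_le_natDegree (phiW w f)
  have e2 := Polynomial.natTrailingDegree_le_natDegree (phiW w g)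
  have hfeq : (phiW w f).natTrailingDegree = (phiW w f).natDegree := by omega
  have hgeq : (phiW w g).natTrailingDegree = (phiW w g).natDegree := by omega
  have key : ∀ (p : MvPolynomial σ ℚ), phiW w p ≠ 0 →
      (phiW w p).natTrailingDegree = (phiW w p).natDegree →
      IsWeightedHomogeneous w p ((phiW w p).natDegree) := by
    intro p hp0 heq m hm
    by_contra hne
    have hzero : (phiW w p).coeff ((Finsupp.weight w m : ℕ)) = 0 := by
      rcases lt_or_gt_of_ne hne with hlt | hgt
      · apply Polynomial.coeff_eq_zero_of_lt_natTrailingDegree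
        omega
      · exact Polynomial.coeff_eq_zero_of_natDegree_lt hgt
    have := coeff_coeff_phiW w p m ((Finsupp.weight w m : ℕ))
    rw [if_pos rfl, hzero] at this
    exact hm this.symm
  exact ⟨(phiW w f).natDegree, (phiW w g).natDegree, h1, key f hF hfeq, key g hG hgeq⟩


variable {I : Type} [Fintype I] [DecidableEq I]

noncomputable def mperm (σ : Equiv.Perm I) : (I × I) →₀ ℕ :=
  ∑ i : I, Finsupp.single (σ i, i) 1

lemma mperm_apply (σ : Equiv.Perm I) (r c : I) :
    mperm σ (r, c) = if σ c = r then 1 else 0 := by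
  classical
  rw [mperm, Finset.sum_apply']
  rw [Finset.sum_eq_single c]
  · simp [Finsupp.single_apply, Prod.ext_iff]
  · intro b _ hb
    rw [Finsupp.single_apply, if_neg]
    intro hcon
    exact hb (congrArg Prod.snd hcon)
  · intro h
    exact absurd (Finset.mem_univ c) h

lemma mperm_inj {σ τ : Equiv.Perm I} (h : mperm σ = mperm τ) : σ = τ := by
  ext c
  have h2 : mperm σ (σ c, c) = mperm τ (σ c, c) := by rw [h]
  rw [mperm_apply, mperm_apply, if_pos rfl] at h2
  by_contra hne
  rw [if_neg (fun hh : τ c = σ c => hne hh.symm)] at h2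
  exact one_ne_zero h2

variable (Z : I → I → Prop) [DecidableRel Z]

noncomputable def patM : Matrix I I (MvPolynomial (I × I) ℚ) :=
  Matrix.of fun i j => if Z i j then MvPolynomial.X (i, j) else 0

lemma patM_eq_zero_iff (i j : I) : patM Z i j = 0 ↔ ¬ Z i j := by
  simp only [patM, Matrix.of_apply]
  split_ifs with h
  · simp [h, MvPolynomial.X_ne_zero]
  · simp [h]

lemma constantCoeff_patM (i j : I) : constantCoeff (patM Z i j) = 0 := by
  simp only [patM, Matrix.of_apply]
  split_ifs <;> simp

lemma prod_X_eq_monomial {α : Type} (s : Finset α) (f : α → I × I) :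
    (∏ i ∈ s, (MvPolynomial.X (f i) : MvPolynomial (I × I) ℚ))
      = monomial (∑ i ∈ s, Finsupp.single (f i) 1) 1 := by
  classical
  induction s using Finset.cons_induction with
  | empty => simp
  | cons a s ha ih =>
    rw [Finset.prod_cons, Finset.sum_cons, ih, X, monomial_mul, one_mul]

lemma det_patM :
    (patM Z).det = ∑ σ ∈ univ.filter (fun σ : Equiv.Perm I => ∀ i, Z (σ i) i),
      (Equiv.Perm.sign σ : ℤ) • (monomial (mperm σ) (1 : ℚ)) := by
  classical
  have key : ∀ σ : Equiv.Perm I, (∏ i : I, patM Z (σ i) i)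
      = if (∀ i, Z (σ i) i) then (monomial (mperm σ) (1 : ℚ)) else 0 := by
    intro σ
    by_cases h : ∀ i, Z (σ i) i
    · rw [if_pos h, mperm, ← prod_X_eq_monomial]
      exact Finset.prod_congr rfl fun i _ => by simp [patM, h i]
    · rw [if_neg h]
      push_neg at h
      obtain ⟨i, hi⟩ := h
      exact Finset.prod_eq_zero (Finset.mem_univ i) (by simp [patM, hi])
  rw [Matrix.det_apply, Finset.sum_filter]
  apply Finset.sum_congr rfl
  intro σ _
  rw [key]
  split_ifs with h
  · rw [Units.smul_def]
  · simp

lemma coeff_det_mperm (σ : Equiv.Perm I) (hσ : ∀ i, Z (σ i) i) :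
    MvPolynomial.coeff (mperm σ) (patM Z).det = ((Equiv.Perm.sign σ : ℤ) : ℚ) := by
  classical
  rw [det_patM, MvPolynomial.coeff_sum]
  rw [Finset.sum_eq_single σ]
  · rw [MvPolynomial.coeff_smul, MvPolynomial.coeff_monomial, if_pos rfl]
    simp
  · intro τ _ hne
    rw [MvPolynomial.coeff_smul, MvPolynomial.coeff_monomial,
      if_neg (fun he => hne (mperm_inj he)), smul_zero]
  · intro h
    exact absurd (Finset.mem_filter.mpr ⟨Finset.mem_univ σ, hσ⟩) h

lemma exists_perm_of_coeff_ne {m : (I × I) →₀ ℕ}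
    (hm : MvPolynomial.coeff m (patM Z).det ≠ 0) :
    ∃ σ : Equiv.Perm I, (∀ i, Z (σ i) i) ∧ m = mperm σ := by
  classical
  rw [det_patM, MvPolynomial.coeff_sum] at hm
  obtain ⟨σ, hσ, hne⟩ := Finset.exists_ne_zero_of_sum_ne_zero hm
  refine ⟨σ, (Finset.mem_filter.mp hσ).2, ?_⟩
  by_contra h
  rw [MvPolynomial.coeff_smul, MvPolynomial.coeff_monomial,
    if_neg (fun he => h he.symm), smul_zero] at hne
  exact hne rfl

lemma exists_good (h : (patM Z).det ≠ 0) : ∃ σ : Equiv.Perm I, ∀ i, Z (σ i) i := by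
  obtain ⟨m, hm⟩ := MvPolynomial.ne_zero_iff.mp h
  obtain ⟨σ, hσ, _⟩ := exists_perm_of_coeff_ne Z hm
  exact ⟨σ, hσ⟩


def rowW (i : I) : I × I → ℕ := fun v => if v.1 = i then 1 else 0

def colW (j : I) : I × I → ℕ := fun v => if v.2 = j then 1 else 0

lemma weight_single (w : I × I → ℕ) (v : I × I) (n : ℕ) :
    Finsupp.weight w (Finsupp.single v n) = n * w v := by
  rw [Finsupp.weight_apply, Finsupp.sum_single_index]
  · rw [smul_eq_mul]
  · simp

lemma weight_mperm_row (σ : Equiv.Perm I) (i : I) :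
    Finsupp.weight (rowW i) (mperm σ) = 1 := by
  classical
  rw [mperm, map_sum]
  have step : ∀ c : I, Finsupp.weight (rowW i) (Finsupp.single (σ c, c) 1)
      = if c = σ.symm i then 1 else 0 := by
    intro c
    rw [weight_single, one_mul, rowW]
    simp only
    congr 1
    rw [eq_iff_iff]
    exact (Equiv.apply_eq_iff_eq_symm_apply σ).trans Iff.rfl
  rw [Finset.sum_congr rfl fun c _ => step c, Finset.sum_ite_eq' univ (σ.symm i) fun _ => 1,
    if_pos (Finset.mem_univ _)]

lemma weight_mperm_col (σ : Equiv.Perm I) (j : I) :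
    Finsupp.weight (colW j) (mperm σ) = 1 := by
  classical
  rw [mperm, map_sum]
  have step : ∀ c : I, Finsupp.weight (colW j) (Finsupp.single (σ c, c) 1)
      = if c = j then 1 else 0 := by
    intro c
    rw [weight_single, one_mul, colW]
  rw [Finset.sum_congr rfl fun c _ => step c, Finset.sum_ite_eq' univ j fun _ => 1,
    if_pos (Finset.mem_univ _)]

lemma det_hom_row (i : I) : IsWeightedHomogeneous (rowW i) (patM Z).det 1 := by
  intro m hm
  obtain ⟨σ, _, rfl⟩ := exists_perm_of_coeff_ne Z hm
  exact weight_mperm_row σ i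

lemma det_hom_col (j : I) : IsWeightedHomogeneous (colW j) (patM Z).det 1 := by
  intro m hm
  obtain ⟨σ, _, rfl⟩ := exists_perm_of_coeff_ne Z hm
  exact weight_mperm_col σ j

lemma weight_row_of_le {σ : Equiv.Perm I} {m : (I × I) →₀ ℕ}
    (hle : ∀ v, m v ≤ mperm σ v) (i : I) :
    Finsupp.weight (rowW i) m = m (i, σ.symm i) := by
  classical
  rw [Finsupp.weight_apply, Finsupp.sum]
  rw [Finset.sum_eq_single (i, σ.symm i)]
  · simp [rowW]
  · rintro ⟨x, y⟩ _ hne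
    by_cases hx : x = i
    · subst hx
      have hy : y ≠ σ.symm x := fun h => hne (by rw [h])
      have h0 : mperm σ (x, y) = 0 := by
        rw [mperm_apply, if_neg]
        intro h
        exact hy (by rw [← h, Equiv.symm_apply_apply])
      have hm0 : m (x, y) = 0 := Nat.le_zero.mp (h0 ▸ hle (x, y))
      simp [hm0]
    · simp [rowW, hx]
  · intro h
    rw [Finsupp.notMem_support_iff.mp h]
    simp

lemma weight_col_of_le {σ : Equiv.Perm I} {m : (I × I) →₀ ℕ}
    (hle : ∀ v, m v ≤ mperm σ v) (j : I) :
    Finsupp.weight (colW j) m = m (σ j, j) := by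
  classical
  rw [Finsupp.weight_apply, Finsupp.sum]
  rw [Finset.sum_eq_single (σ j, j)]
  · simp [colW]
  · rintro ⟨x, y⟩ _ hne
    by_cases hy : y = j
    · subst hy
      have hx : x ≠ σ y := fun h => hne (by rw [h])
      have h0 : mperm σ (x, y) = 0 := by
        rw [mperm_apply, if_neg (fun h => hx h.symm)]
      have hm0 : m (x, y) = 0 := Nat.le_zero.mp (h0 ▸ hle (x, y))
      simp [hm0]
    · simp [colW, hy]
  · intro h
    rw [Finsupp.notMem_support_iff.mp h]
    simp

lemma isUnit_of_all_row_zero {f : MvPolynomial (I × I) ℚ} (hf0 : f ≠ 0)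
    (h : ∀ i, IsWeightedHomogeneous (rowW i) f 0) : IsUnit f := by
  classical
  have hsupp : ∀ m : (I × I) →₀ ℕ, MvPolynomial.coeff m f ≠ 0 → m = 0 := by
    intro m hm
    ext v
    have h1 : m v ≤ Finsupp.weight (rowW v.1) m :=
      Finsupp.le_weight _ (by simp [rowW]) m
    rw [h v.1 hm] at h1
    simpa using h1
  have hfc : f = MvPolynomial.C (MvPolynomial.coeff 0 f) := by
    ext m
    rcases eq_or_ne m 0 with rfl | hm
    · simp
    · rw [MvPolynomial.coeff_C, if_neg (Ne.symm hm)]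
      by_contra hc
      exact hm (hsupp m hc)
  have hc0 : MvPolynomial.coeff 0 f ≠ 0 := fun h0 => hf0 (by rw [hfc, h0, map_zero])
  rw [hfc]
  exact (isUnit_iff_ne_zero.mpr hc0).map MvPolynomial.C

lemma sign_cast_ne (τ : Equiv.Perm I) : ((Equiv.Perm.sign τ : ℤ) : ℚ) ≠ 0 := by
  rcases Int.units_eq_one_or (Equiv.Perm.sign τ) with h | h <;> simp [h]


lemma exists_good_through (hdet : (patM Z).det ≠ 0)
    (hblock : ¬ ∃ R C : Finset I, R.Nonempty ∧ C.Nonempty ∧ R ≠ Finset.univ ∧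
        C ≠ Finset.univ ∧ R.card + C.card = Fintype.card I ∧ ∀ r ∈ R, ∀ c ∈ C, ¬ Z r c)
    {r c : I} (hZ : Z r c) : ∃ σ : Equiv.Perm I, (∀ i, Z (σ i) i) ∧ σ c = r := by
  classical
  obtain ⟨σ₀, hσ₀⟩ := exists_good Z hdet
  have hcount : ∀ S : Finset I,
      S.card ≤ (S.biUnion fun j => univ.filter (fun i => Z i j)).card := by
    intro S
    have himg : S.image σ₀ ⊆ S.biUnion fun j => univ.filter fun i => Z i j := by
      intro x hx
      obtain ⟨j, hj, rfl⟩ := Finset.mem_image.mp hx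
      exact Finset.mem_biUnion.mpr ⟨j, hj, Finset.mem_filter.mpr ⟨Finset.mem_univ _, hσ₀ j⟩⟩
    calc S.card = (S.image σ₀).card := (Finset.card_image_of_injective S σ₀.injective).symm
      _ ≤ _ := Finset.card_le_card himg
  set t : I → Finset I := fun j => if j = c then {r} else univ.filter fun i => Z i j with ht
  have hall : ∀ S : Finset I, S.card ≤ (S.biUnion t).card := by
    intro S
    set S' := S.erase c with hS'
    set N' := S'.biUnion (fun j => univ.filter fun i => Z i j) with hN'
    have hsub : N' ⊆ S.biUnion t := by
      intro x hx
      obtain ⟨j, hj, hxj⟩ := Finset.mem_biUnion.mp hx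
      refine Finset.mem_biUnion.mpr ⟨j, Finset.mem_of_mem_erase hj, ?_⟩
      rw [ht]
      simp only
      rw [if_neg (Finset.ne_of_mem_erase hj)]
      exact hxj
    have hcard' : S'.card ≤ N'.card := hcount S'
    by_cases hc : c ∈ S
    · have hScard : S.card = S'.card + 1 := by
        rw [hS', Finset.card_erase_of_mem hc]
        have : 1 ≤ S.card := Finset.card_pos.mpr ⟨c, hc⟩
        omega
      have hrsub : insert r N' ⊆ S.biUnion t := by
        apply Finset.insert_subset ?_ hsub
        refine Finset.mem_biUnion.mpr ⟨c, hc, ?_⟩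
        rw [ht]
        simp
      have hkey : S'.card + 1 ≤ (insert r N').card := by
        by_cases hr : r ∈ N'
        · rw [Finset.card_insert_of_mem hr]
          by_contra hlt
          push_neg at hlt
          have hcardeq : N'.card = S'.card := le_antisymm (by omega) hcard'
          apply hblock
          have hS'le : S'.card ≤ Fintype.card I - 1 := by
            have hsub2 : S' ⊆ univ.erase c := fun x hx =>
              Finset.mem_erase.mpr ⟨Finset.ne_of_mem_erase hx, Finset.mem_univ x⟩
            have := Finset.card_le_card hsub2
            rwa [Finset.card_erase_of_mem (Finset.mem_univ c), Finset.card_univ] at this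
          have hk1 : 1 ≤ Fintype.card I := Fintype.card_pos_iff.mpr ⟨c⟩
          refine ⟨univ \ N', S', ?_, ?_, ?_, ?_, ?_, ?_⟩
          · rw [← Finset.card_pos, Finset.card_sdiff_of_subset (Finset.subset_univ N'),
              Finset.card_univ]
            omega
          · obtain ⟨j, hj, _⟩ := Finset.mem_biUnion.mp hr
            exact ⟨j, hj⟩
          · intro hcon
            have hmem : r ∈ univ \ N' := by rw [hcon]; exact Finset.mem_univ r
            exact (Finset.mem_sdiff.mp hmem).2 hr
          · intro hcon
            apply Finset.notMem_erase c S
            show c ∈ S'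
            rw [hcon]
            exact Finset.mem_univ c
          · rw [Finset.card_sdiff_of_subset (Finset.subset_univ N'), Finset.card_univ, hcardeq]
            omega
          · intro a ha b hb hZab
            exact (Finset.mem_sdiff.mp ha).2
              (Finset.mem_biUnion.mpr ⟨b, hb, Finset.mem_filter.mpr ⟨Finset.mem_univ _, hZab⟩⟩)
        · rw [Finset.card_insert_of_notMem hr]
          omega
      calc S.card = S'.card + 1 := hScard
        _ ≤ (insert r N').card := hkey
        _ ≤ (S.biUnion t).card := Finset.card_le_card hrsub
    · have heq : S' = S := Finset.erase_eq_of_notMem hc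
      calc S.card = S'.card := by rw [heq]
        _ ≤ N'.card := hcard'
        _ ≤ (S.biUnion t).card := Finset.card_le_card hsub
  obtain ⟨f, hfinj, hft⟩ := (Finset.all_card_le_biUnion_card_iff_existsInjective' t).mp hall
  have hbij : Function.Bijective f := Finite.injective_iff_bijective.mp hfinj
  have hfc : f c = r := by
    have := hft c
    rw [ht] at this
    simpa using this
  refine ⟨Equiv.ofBijective f hbij, ?_, hfc⟩
  intro i
  show Z (f i) i
  by_cases hi : i = c
  · subst hi
    rw [hfc]
    exact hZ
  · have := hft i
    rw [ht] at this
    simp only [if_neg hi, Finset.mem_filter] at this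
    exact this.2

lemma not_isUnit_det_of_constantCoeff {J : Type} [Fintype J] [DecidableEq J] [Nonempty J]
    (B : Matrix J J (MvPolynomial (I × I) ℚ)) (hB : ∀ i j, constantCoeff (B i j) = 0) :
    ¬ IsUnit B.det := by
  intro h
  have h0 : constantCoeff B.det = 0 := by
    rw [RingHom.map_det]
    have hz : B.map constantCoeff = 0 := by
      ext i j
      exact hB i j
    show (B.map constantCoeff).det = 0
    rw [hz, Matrix.det_zero]
  have := h.map (constantCoeff (σ := I × I) (R := ℚ))
  rw [h0] at this
  exact not_isUnit_zero this


lemma not_irreducible_of_block (hdet : (patM Z).det ≠ 0)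
    {R C : Finset I} (hR : R.Nonempty) (hC : C.Nonempty) (hRu : R ≠ Finset.univ)
    (hCu : C ≠ Finset.univ) (hsum : R.card + C.card = Fintype.card I)
    (hzero : ∀ r ∈ R, ∀ c ∈ C, patM Z r c = 0) : ¬ Irreducible (patM Z).det := by
  classical
  intro hirr
  have hRle : R.card ≤ Fintype.card I := by simpa using Finset.card_le_univ R
  have hCle : C.card ≤ Fintype.card I := by simpa using Finset.card_le_univ C
  have hc1 : Fintype.card {x // x ∈ C} = Fintype.card {x : I // ¬ x ∈ R} := by
    rw [Fintype.card_subtype_compl, Fintype.card_coe, Fintype.card_coe]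
    omega
  have hc2 : Fintype.card {x : I // ¬ x ∈ C} = Fintype.card {x // x ∈ R} := by
    rw [Fintype.card_subtype_compl, Fintype.card_coe, Fintype.card_coe]
    omega
  let ρ₁ : {x // x ∈ C} ≃ {x : I // ¬ x ∈ R} := Fintype.equivOfCardEq hc1
  let ρ₂ : {x : I // ¬ x ∈ C} ≃ {x // x ∈ R} := Fintype.equivOfCardEq hc2
  let er : ({x // x ∈ C} ⊕ {x : I // ¬ x ∈ C}) ≃ I :=
    (Equiv.sumCongr ρ₁ ρ₂).trans ((Equiv.sumComm _ _).trans (Equiv.sumCompl (· ∈ R)))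
  let ec : ({x // x ∈ C} ⊕ {x : I // ¬ x ∈ C}) ≃ I := Equiv.sumCompl (· ∈ C)
  have her_inr : ∀ x : {x : I // ¬ x ∈ C}, er (Sum.inr x) = (ρ₂ x : I) := fun x => rfl
  have hec_inl : ∀ y : {x // x ∈ C}, ec (Sum.inl y) = (y : I) := fun y => rfl
  set M' := (patM Z).submatrix er ec with hM'
  have hblock21 : M'.toBlocks₂₁ = 0 := by
    apply Matrix.ext
    intro x y
    simp only [Matrix.toBlocks₂₁, Matrix.zero_apply, Matrix.of_apply]
    rw [hM', Matrix.submatrix_apply, her_inr, hec_inl]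
    exact hzero _ (ρ₂ x).2 _ y.2
  have hM'det : M'.det = M'.toBlocks₁₁.det * M'.toBlocks₂₂.det := by
    conv_lhs => rw [← Matrix.fromBlocks_toBlocks M', hblock21]
    rw [Matrix.det_fromBlocks_zero₂₁]
  set π : ({x // x ∈ C} ⊕ {x : I // ¬ x ∈ C}) ≃ ({x // x ∈ C} ⊕ {x : I // ¬ x ∈ C}) :=
    er.trans ec.symm with hπ
  have h1 : M' = ((patM Z).submatrix ec ec).submatrix π id := by
    ext a b
    simp [hM', hπ, Matrix.submatrix_apply]
  have h2 : M'.det = (((Equiv.Perm.sign π : ℤ) : MvPolynomial (I × I) ℚ)) * (patM Z).det := by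
    rw [h1, Matrix.det_permute, Matrix.det_submatrix_equiv_self]
  set ε : MvPolynomial (I × I) ℚ := ((Equiv.Perm.sign π : ℤ) : MvPolynomial (I × I) ℚ) with hε
  have hεε : ε * ε = 1 := by
    rcases Int.units_eq_one_or (Equiv.Perm.sign π) with h | h <;> simp [hε, h]
  have hfact : (patM Z).det = (ε * M'.toBlocks₁₁.det) * M'.toBlocks₂₂.det := by
    have : ε * M'.det = ε * (ε * (patM Z).det) := by rw [h2]
    rw [← mul_assoc, hεε, one_mul] at this
    rw [← this, hM'det]
    ring
  have hentry : ∀ a b : I, constantCoeff (patM Z a b) = 0 := constantCoeff_patM Z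
  have hNC : Nonempty {x // x ∈ C} := ⟨⟨hC.choose, hC.choose_spec⟩⟩
  have hNCc : Nonempty {x : I // ¬ x ∈ C} := by
    have hex : ∃ x, x ∉ C := by
      by_contra hcon
      push_neg at hcon
      exact hCu (Finset.eq_univ_iff_forall.mpr hcon)
    obtain ⟨x, hx⟩ := hex
    exact ⟨⟨x, hx⟩⟩
  have hA : ¬ IsUnit M'.toBlocks₁₁.det := by
    apply not_isUnit_det_of_constantCoeff
    intro i j
    exact hentry _ _
  have hD : ¬ IsUnit M'.toBlocks₂₂.det := by
    apply not_isUnit_det_of_constantCoeff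
    intro i j
    exact hentry _ _
  rcases hirr.isUnit_or_isUnit hfact with h | h
  · apply hA
    have : M'.toBlocks₁₁.det = ε * (ε * M'.toBlocks₁₁.det) := by
      rw [← mul_assoc, hεε, one_mul]
    rw [this]
    have hεu : IsUnit ε := by
      rcases Int.units_eq_one_or (Equiv.Perm.sign π) with hh | hh <;>
        · rw [hε, hh]
          simp
    exact hεu.mul h
  · exact hD h


lemma irreducible_det (hk : 1 ≤ Fintype.card I) (hdet : (patM Z).det ≠ 0)
    (hblock : ¬ ∃ R C : Finset I, R.Nonempty ∧ C.Nonempty ∧ R ≠ Finset.univ ∧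
        C ≠ Finset.univ ∧ R.card + C.card = Fintype.card I ∧ ∀ r ∈ R, ∀ c ∈ C, ¬ Z r c) :
    Irreducible (patM Z).det := by
  classical
  have hIne : Nonempty I := Fintype.card_pos_iff.mp (by omega)
  constructor
  · exact not_isUnit_det_of_constantCoeff (patM Z) (fun i j => constantCoeff_patM Z i j)
  · intro f g hfg
    by_contra hcon
    push_neg at hcon
    obtain ⟨hf, hg⟩ := hcon
    have hf0 : f ≠ 0 := fun h => hdet (by rw [hfg, h, zero_mul])
    have hg0 : g ≠ 0 := fun h => hdet (by rw [hfg, h, mul_zero])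
    have hrow : ∀ i, ∃ a b : ℕ, a + b = 1 ∧ IsWeightedHomogeneous (rowW i) f a ∧
        IsWeightedHomogeneous (rowW i) g b := fun i =>
      factor_hom _ hf0 hg0 (hfg ▸ det_hom_row Z i)
    choose a b hab haf hbg using hrow
    have hcol : ∀ j, ∃ cj dj : ℕ, cj + dj = 1 ∧ IsWeightedHomogeneous (colW j) f cj ∧
        IsWeightedHomogeneous (colW j) g dj := fun j =>
      factor_hom _ hf0 hg0 (hfg ▸ det_hom_col Z j)
    choose cd dd hcd hcf hdg using hcol
    obtain ⟨σ₀, hσ₀⟩ := exists_good Z hdet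
    have hco : MvPolynomial.coeff (mperm σ₀) (f * g) ≠ 0 := by
      rw [← hfg, coeff_det_mperm Z σ₀ hσ₀]
      exact sign_cast_ne σ₀
    rw [MvPolynomial.coeff_mul] at hco
    obtain ⟨mp, hmp, hne⟩ := Finset.exists_ne_zero_of_sum_ne_zero hco
    have hm1 : MvPolynomial.coeff mp.1 f ≠ 0 := left_ne_zero_of_mul hne
    have hsum : mp.1 + mp.2 = mperm σ₀ := Finset.HasAntidiagonal.mem_antidiagonal.mp hmp
    have hle : ∀ v, mp.1 v ≤ mperm σ₀ v := fun v => by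
      rw [← hsum, Finsupp.add_apply]
      exact Nat.le_add_right _ _
    have ha_eq : ∀ i, a i = mp.1 (i, σ₀.symm i) := fun i => by
      rw [← haf i hm1, weight_row_of_le hle i]
    have hcd_eq : ∀ j, cd j = mp.1 (σ₀ j, j) := fun j => by
      rw [← hcf j hm1, weight_col_of_le hle j]
    set Rf : Finset I := univ.filter (fun i => a i = 1) with hRf
    set Cf : Finset I := univ.filter (fun j => cd j = 1) with hCf
    have hRfCf : Rf = Cf.image σ₀ := by
      ext i
      simp only [hRf, hCf, Finset.mem_filter, Finset.mem_image, Finset.mem_univ, true_and]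
      constructor
      · intro hi
        refine ⟨σ₀.symm i, ?_, Equiv.apply_symm_apply σ₀ i⟩
        rw [hcd_eq, Equiv.apply_symm_apply, ← ha_eq]
        exact hi
      · rintro ⟨j, hj, rfl⟩
        rw [ha_eq, Equiv.symm_apply_apply, ← hcd_eq]
        exact hj
    have hcards : Rf.card = Cf.card := by
      rw [hRfCf, Finset.card_image_of_injective _ σ₀.injective]
    have hRfne : Rf.Nonempty := by
      rw [Finset.nonempty_iff_ne_empty]
      intro he
      apply hf
      apply isUnit_of_all_row_zero hf0
      intro i
      have hai : a i = 0 := by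
        have hni : i ∉ Rf := by rw [he]; exact Finset.notMem_empty i
        rw [hRf, Finset.mem_filter] at hni
        simp only [Finset.mem_univ, true_and] at hni
        have := hab i
        omega
      rw [← hai]
      exact haf i
    have hRgne : Rfᶜ.Nonempty := by
      rw [Finset.nonempty_iff_ne_empty]
      intro he
      apply hg
      apply isUnit_of_all_row_zero hg0
      intro i
      have hbi : b i = 0 := by
        have hni : i ∉ Rfᶜ := by rw [he]; exact Finset.notMem_empty i
        rw [Finset.mem_compl, not_not, hRf, Finset.mem_filter] at hni
        have := hab i
        omega
      rw [← hbi]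
      exact hbg i
    have hRfle : Rf.card ≤ Fintype.card I := by simpa using Finset.card_le_univ Rf
    have hRgc : Rfᶜ.card = Fintype.card I - Rf.card := by
      rw [Finset.card_compl]
    have hRgpos : 1 ≤ Rfᶜ.card := Finset.card_pos.mpr hRgne
    apply hblock
    refine ⟨Rfᶜ, Cf, hRgne, ?_, ?_, ?_, ?_, ?_⟩
    · rw [← Finset.card_pos, ← hcards, Finset.card_pos]
      exact hRfne
    · intro hcon
      obtain ⟨i, hi⟩ := hRfne
      have : i ∈ Rfᶜ := by rw [hcon]; exact Finset.mem_univ i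
      exact (Finset.mem_compl.mp this) hi
    · intro hcon
      have h1 : Cf.card = Fintype.card I := by rw [hcon, Finset.card_univ]
      have h2 : Rf.card = Fintype.card I := by rw [hcards, h1]
      rw [hRgc, h2, Nat.sub_self] at hRgpos
      exact absurd hRgpos (by omega)
    · rw [hRgc, ← hcards]
      omega
    · intro r hr c hc hZrc
      obtain ⟨τ, hτ, hτc⟩ := exists_good_through Z hdet hblock hZrc
      have hct : MvPolynomial.coeff (mperm τ) (f * g) ≠ 0 := by
        rw [← hfg, coeff_det_mperm Z τ hτ]
        exact sign_cast_ne τ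
      apply hct
      rw [MvPolynomial.coeff_mul]
      apply Finset.sum_eq_zero
      intro x hx
      by_cases h1 : MvPolynomial.coeff x.1 f = 0
      · rw [h1, zero_mul]
      · exfalso
        have hxsum : x.1 + x.2 = mperm τ := Finset.HasAntidiagonal.mem_antidiagonal.mp hx
        have hxle : ∀ v, x.1 v ≤ mperm τ v := fun v => by
          rw [← hxsum, Finsupp.add_apply]
          exact Nat.le_add_right _ _
        have e1 : cd c = x.1 (τ c, c) := by
          rw [← hcf c h1, weight_col_of_le hxle c]
        have e2 : a r = x.1 (r, τ.symm r) := by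
          rw [← haf r h1, weight_row_of_le hxle r]
        have hτs : τ.symm r = c := by rw [← hτc, Equiv.symm_apply_apply]
        have hc1 : cd c = 1 := (Finset.mem_filter.mp hc).2
        have ha0 : a r = 0 := by
          have hnr : r ∉ Rf := Finset.mem_compl.mp hr
          rw [hRf, Finset.mem_filter] at hnr
          simp only [Finset.mem_univ, true_and] at hnr
          have := hab r
          omega
        rw [hτc] at e1
        rw [hτs] at e2
        omega

end FrobKonig

/-- Theorem 1.8, Frobenius–König irreducibility criterion.
For a `k × k` matrix `M` over `ℚ[x_{ij}]` whose entries are the distinct indeterminates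
`x_{ij}` on a zero pattern `Z` (and `0` elsewhere), with `det M ≠ 0`:
`det M` is irreducible iff `M` is combinatorially irreducible, i.e. there are no nonempty
proper subsets `R`, `C` of the index set with `|R| + |C| = k` and `M r c = 0` for all
`r ∈ R`, `c ∈ C`. -/
theorem stmt_1 {I : Type} [Fintype I] [DecidableEq I] (k : ℕ) (hk : 1 ≤ k)
    (hcard : Fintype.card I = k) (Z : I → I → Prop) [DecidableRel Z]
    (M : Matrix I I (MvPolynomial (I × I) ℚ))
    (hM : ∀ i j, M i j = if Z i j then MvPolynomial.X (i, j) else 0)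
    (hdet : M.det ≠ 0) :
    Irreducible M.det ↔
      ¬ ∃ R C : Finset I, R.Nonempty ∧ C.Nonempty ∧ R ≠ Finset.univ ∧ C ≠ Finset.univ ∧
        R.card + C.card = k ∧ ∀ r ∈ R, ∀ c ∈ C, M r c = 0 := by
  classical
  subst hcard
  have hMp : M = FrobKonig.patM Z := by
    apply Matrix.ext
    intro i j
    rw [hM]
    rfl
  subst hMp
  constructor
  · intro hirr
    rintro ⟨R, C, hR, hC, hRu, hCu, hsum, hz⟩
    exact FrobKonig.not_irreducible_of_block Z hdet hR hC hRu hCu hsum hz hirr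
  · intro hnb
    apply FrobKonig.irreducible_det Z hk hdet
    rintro ⟨R, C, h1, h2, h3, h4, h5, h6⟩
    exact hnb ⟨R, C, h1, h2, h3, h4, h5, fun r hr c hc =>
      (FrobKonig.patM_eq_zero_iff Z r c).mpr (h6 r hr c hc)⟩
end

section
/- Let n ≥ 1 and let H be an (n+1)×(n+1) matrix over a commutative ring (rows and columns indexed by 0,…,n) whose self-coupling positions are exactly the superdiagonal positions (i, i+1) for i = 0,…,n−1 (so H has exactly one self-coupling in every row except the last and exactly one in every column except the first), and assume every self-coupling entry of H is nonzero. Suppose P and Q are (n+1)×(n+1) permutation matrices such that PHQ is block partitioned as [[A, B, C], [0, B_η, D], [0, 0, E]] with square diagonal blocks A, B_η, E (where A and/or E may have size 0), B_η of size k × k, and the indicated blocks below the diagonal identically zero. Then the number of self-coupling entries of H that appear in B_η is either k−1 or k. -/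
private lemma card_filter_fin (m : ℕ) (p : ℕ → Prop) [DecidablePred p] :
    (Finset.univ.filter (fun x : Fin m => p x.val)).card
      = ((Finset.range m).filter p).card := by
  rw [Finset.card_filter, Finset.card_filter,
    Fin.sum_univ_eq_sum_range (fun j => if p j then 1 else 0)]

private lemma band_card (m a b : ℕ) (hb : b ≤ m) :
    (Finset.univ.filter (fun x : Fin m => a ≤ x.val ∧ x.val < b)).card = b - a := by
  rw [card_filter_fin m (fun y => a ≤ y ∧ y < b)]
  have h : (Finset.range m).filter (fun x => a ≤ x ∧ x < b) = Finset.Ico a b := by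
    ext x
    simp only [Finset.mem_filter, Finset.mem_range, Finset.mem_Ico]
    omega
  rw [h, Nat.card_Ico]

/-- Theorem 4.5, combinatorial form.  The homeostasis matrix `H` has its
(nonzero) self-coupling entries exactly at the superdiagonal positions `(i, i+1)`.
If row and column permutations `σ`, `τ` bring `H` to block upper triangular form
`[[A,B,C],[0,B_η,D],[0,0,E]]` with square diagonal blocks of sizes `a`, `k`, `e`
(the middle block `B_η` occupying rows and columns `a ≤ · < a + k` of the permuted matrix),
then the number of self-coupling entries of `H` appearing in `B_η` is `k - 1` or `k`. -/
theorem stmt_2 {R : Type*} [CommRing R] (n : ℕ) (hn : 1 ≤ n)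
    (H : Matrix (Fin (n + 1)) (Fin (n + 1)) R)
    (hsc : ∀ i : Fin n, H i.castSucc i.succ ≠ 0)
    (σ τ : Equiv.Perm (Fin (n + 1))) (a k e : ℕ) (hk : 1 ≤ k)
    (hake : a + k + e = n + 1)
    (hzero : ∀ r c : Fin (n + 1),
      ((a ≤ (r : ℕ) ∧ (c : ℕ) < a) ∨ (a + k ≤ (r : ℕ) ∧ (c : ℕ) < a + k)) →
      H (σ r) (τ c) = 0) :
    (Finset.univ.filter (fun i : Fin n =>
        a ≤ (σ.symm i.castSucc : ℕ) ∧ (σ.symm i.castSucc : ℕ) < a + k ∧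
        a ≤ (τ.symm i.succ : ℕ) ∧ (τ.symm i.succ : ℕ) < a + k)).card = k - 1 ∨
    (Finset.univ.filter (fun i : Fin n =>
        a ≤ (σ.symm i.castSucc : ℕ) ∧ (σ.symm i.castSucc : ℕ) < a + k ∧
        a ≤ (τ.symm i.succ : ℕ) ∧ (τ.symm i.succ : ℕ) < a + k)).card = k := by
  classical
  -- the row and column positions of the self-couplings in the permuted matrix
  have hfinj : Function.Injective (fun i : Fin n => σ.symm i.castSucc) := by
    intro i j h
    exact Fin.castSucc_injective n (σ.symm.injective h)
  have hginj : Function.Injective (fun i : Fin n => τ.symm i.succ) := by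
    intro i j h
    exact Fin.succ_injective n (τ.symm.injective h)
  -- block-zero constraints on the self-coupling positions
  have key : ∀ i : Fin n,
      (a ≤ ((σ.symm i.castSucc : Fin (n+1)) : ℕ) → a ≤ ((τ.symm i.succ : Fin (n+1)) : ℕ)) ∧
      (a + k ≤ ((σ.symm i.castSucc : Fin (n+1)) : ℕ) →
        a + k ≤ ((τ.symm i.succ : Fin (n+1)) : ℕ)) := by
    intro i
    have hne : H (σ (σ.symm i.castSucc)) (τ (τ.symm i.succ)) ≠ 0 := by
      simpa using hsc i
    constructor
    · intro h1
      by_contra h2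
      exact hne (hzero _ _ (Or.inl ⟨h1, Nat.lt_of_not_le h2⟩))
    · intro h1
      by_contra h2
      exact hne (hzero _ _ (Or.inr ⟨h1, Nat.lt_of_not_le h2⟩))
  set M := Finset.univ.filter (fun i : Fin n =>
      a ≤ (σ.symm i.castSucc : ℕ) ∧ (σ.symm i.castSucc : ℕ) < a + k ∧
      a ≤ (τ.symm i.succ : ℕ) ∧ (τ.symm i.succ : ℕ) < a + k) with hM
  -- Row count sets
  set F1 := Finset.univ.filter (fun i : Fin n =>
      a ≤ (σ.symm i.castSucc : ℕ) ∧ (σ.symm i.castSucc : ℕ) < a + k) with hF1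
  set F2 := Finset.univ.filter (fun i : Fin n =>
      a + k ≤ (σ.symm i.castSucc : ℕ)) with hF2
  set FH := Finset.univ.filter (fun i : Fin n =>
      a ≤ (σ.symm i.castSucc : ℕ)) with hFH
  set G2 := Finset.univ.filter (fun i : Fin n =>
      a + k ≤ (τ.symm i.succ : ℕ)) with hG2
  -- band subsets of Fin (n+1)
  set B1 := Finset.univ.filter (fun x : Fin (n+1) => a ≤ (x : ℕ) ∧ (x : ℕ) < a + k) with hB1
  set T2 := Finset.univ.filter (fun x : Fin (n+1) => a + k ≤ (x : ℕ)) with hT2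
  set BH := Finset.univ.filter (fun x : Fin (n+1) => a ≤ (x : ℕ)) with hBH
  have hB1card : B1.card = k := by
    rw [hB1, band_card (n+1) a (a+k) (by omega)]; omega
  have hT2card : T2.card = e := by
    have h : T2 = Finset.univ.filter
        (fun x : Fin (n+1) => a + k ≤ (x : ℕ) ∧ (x : ℕ) < n + 1) := by
      rw [hT2]
      apply Finset.filter_congr
      intro x _
      have := x.isLt
      constructor
      · intro h; exact ⟨h, this⟩
      · intro h; exact h.1
    rw [h, band_card (n+1) (a+k) (n+1) le_rfl]; omega
  have hBHcard : BH.card = k + e := by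
    have h : BH = Finset.univ.filter
        (fun x : Fin (n+1) => a ≤ (x : ℕ) ∧ (x : ℕ) < n + 1) := by
      rw [hBH]
      apply Finset.filter_congr
      intro x _
      have := x.isLt
      constructor
      · intro h; exact ⟨h, this⟩
      · intro h; exact h.1
    rw [h, band_card (n+1) a (n+1) le_rfl]; omega
  -- upper bound: M injects into B1 via the row map
  have hMle : M.card ≤ k := by
    rw [← hB1card]
    apply Finset.card_le_card_of_injOn (fun i => σ.symm i.castSucc)
    · intro i hi
      rw [hM, Finset.mem_coe, Finset.mem_filter] at hi
      rw [hB1, Finset.mem_coe, Finset.mem_filter]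
      exact ⟨Finset.mem_univ _, hi.2.1, hi.2.2.1⟩
    · exact hfinj.injOn
  -- G2 injects into T2 via the column map
  have hG2le : G2.card ≤ e := by
    rw [← hT2card]
    apply Finset.card_le_card_of_injOn (fun i => τ.symm i.succ)
    · intro i hi
      rw [hG2, Finset.mem_coe, Finset.mem_filter] at hi
      rw [hT2, Finset.mem_coe, Finset.mem_filter]
      exact ⟨Finset.mem_univ _, hi.2⟩
    · exact hginj.injOn
  -- BH is covered by the image of FH plus one extra point
  have hBHsub : BH ⊆ insert (σ.symm (Fin.last n))
      (FH.image (fun i => σ.symm i.castSucc)) := by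
    intro x hx
    rw [hBH, Finset.mem_filter] at hx
    rcases eq_or_ne x (σ.symm (Fin.last n)) with h | h
    · rw [h]; exact Finset.mem_insert_self _ _
    · apply Finset.mem_insert_of_mem
      have hσx : σ x ≠ Fin.last n := by
        intro hc
        exact h (by rw [← hc, Equiv.symm_apply_apply])
      have hlt : ((σ x : Fin (n+1)) : ℕ) < n := by
        have := (σ x).isLt
        have : ((σ x : Fin (n+1)) : ℕ) ≠ n := fun hc => hσx (Fin.ext hc)
        omega
      refine Finset.mem_image.2 ⟨⟨(σ x : Fin (n+1)) , hlt⟩, ?_, ?_⟩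
      · rw [hFH, Finset.mem_filter]
        refine ⟨Finset.mem_univ _, ?_⟩
        have hxx : σ.symm (Fin.castSucc ⟨((σ x : Fin (n+1)) : ℕ), hlt⟩) = x := by
          have : (Fin.castSucc ⟨((σ x : Fin (n+1)) : ℕ), hlt⟩ : Fin (n+1)) = σ x := by
            apply Fin.ext; simp [Fin.castSucc]
          rw [this, Equiv.symm_apply_apply]
        rw [hxx]
        exact hx.2
      · have : (Fin.castSucc ⟨((σ x : Fin (n+1)) : ℕ), hlt⟩ : Fin (n+1)) = σ x := by
          apply Fin.ext; simp [Fin.castSucc]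
        rw [this, Equiv.symm_apply_apply]
  have hFHge : k + e ≤ FH.card + 1 := by
    calc k + e = BH.card := hBHcard.symm
    _ ≤ (insert (σ.symm (Fin.last n)) (FH.image (fun i => σ.symm i.castSucc))).card :=
        Finset.card_le_card hBHsub
    _ ≤ (FH.image (fun i => σ.symm i.castSucc)).card + 1 := Finset.card_insert_le _ _
    _ ≤ FH.card + 1 := by
        exact Nat.add_le_add_right (Finset.card_image_le) 1
  -- F1 and F2 partition FH
  have hdisj12 : Disjoint F1 F2 := by
    rw [Finset.disjoint_left]
    intro i h1 h2
    rw [hF1, Finset.mem_filter] at h1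
    rw [hF2, Finset.mem_filter] at h2
    omega
  have hunion : F1 ∪ F2 = FH := by
    ext i
    rw [hF1, hF2, hFH]
    simp only [Finset.mem_union, Finset.mem_filter, Finset.mem_univ, true_and]
    omega
  have hFHcard : F1.card + F2.card = FH.card := by
    rw [← Finset.card_union_of_disjoint hdisj12, hunion]
  -- M ⊆ F1
  have hMF1 : M ⊆ F1 := by
    intro i hi
    rw [hM, Finset.mem_filter] at hi
    rw [hF1, Finset.mem_filter]
    exact ⟨Finset.mem_univ _, hi.2.1, hi.2.2.1⟩
  -- F1 \ M and F2 are disjoint subsets of G2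
  have hF1MG2 : F1 \ M ⊆ G2 := by
    intro i hi
    rw [Finset.mem_sdiff] at hi
    obtain ⟨h1, h2⟩ := hi
    rw [hF1, Finset.mem_filter] at h1
    rw [hG2, Finset.mem_filter]
    refine ⟨Finset.mem_univ _, ?_⟩
    by_contra hc
    apply h2
    rw [hM, Finset.mem_filter]
    have hkey := key i
    exact ⟨Finset.mem_univ _, h1.2.1, h1.2.2, hkey.1 h1.2.1, Nat.lt_of_not_le hc⟩
  have hF2G2 : F2 ⊆ G2 := by
    intro i hi
    rw [hF2, Finset.mem_filter] at hi
    rw [hG2, Finset.mem_filter]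
    exact ⟨Finset.mem_univ _, (key i).2 hi.2⟩
  have hdisjsd : Disjoint (F1 \ M) F2 :=
    Finset.disjoint_of_subset_left (Finset.sdiff_subset) hdisj12
  have hsum2 : (F1 \ M).card + F2.card ≤ e := by
    calc (F1 \ M).card + F2.card = ((F1 \ M) ∪ F2).card :=
        (Finset.card_union_of_disjoint hdisjsd).symm
    _ ≤ G2.card := Finset.card_le_card (Finset.union_subset hF1MG2 hF2G2)
    _ ≤ e := hG2le
  have hsdM : (F1 \ M).card + M.card = F1.card := by
    rw [Finset.card_sdiff_add_card_eq_card hMF1]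
  omega
end

section
/- Let G be a core input-output network on a finite node set V with input node ι and output node o, with generic homeostasis matrix H over R = MvPolynomial (V × V) ℚ. Let S₁, …, S_k be the ιo-simple paths of G, and for each i let C_i be the complementary subnetwork of S_i (the induced subnetwork on the nodes of V not on S_i) with generic Jacobian J_{C_i}. Then there exist signs ε₁, …, ε_k ∈ {1, −1} such that det(H) = Σ_{i=1}^{k} ε_i · F_{S_i} · det(J_{C_i}), where F_{S_i} denotes the product of the coupling variables x_{a,b} over the consecutive arrows a → b of the simple path S_i. Moreover, for each i and every ordered pair (a,b) with a ≠ b, the coupling variable x_{a,b} does not divide det(J_{C_i}) in R. -/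
open Classical MvPolynomial

/-- An input-output network: a digraph on node set `V` (`edge a b` means there is an
arrow `a → b`) with a distinguished input node `inp` and a distinct output node `out`. -/
structure IONetwork (V : Type) where
  edge : V → V → Prop
  inp : V
  out : V
  inp_ne_out : inp ≠ out

/-- A cycle: a list of nodes forming a directed path whose first and last nodes coincide. -/
def IsCycle {V : Type} (E : V → V → Prop) (p : List V) : Prop :=
  p.Chain' E ∧ 2 ≤ p.length ∧ p.head? = p.getLast?

/-- Reachability by a directed path all of whose nodes stay inside `W`. -/
def RestrictedReach {V : Type} (E : V → V → Prop) (W : Set V) (a b : V) : Prop :=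
  Relation.ReflTransGen (fun x y => E x y ∧ x ∈ W ∧ y ∈ W) a b

/-- `a` occurs strictly before `b` in the list `p` (both occurring in `p`). -/
def Before {V : Type} [DecidableEq V] (p : List V) (a b : V) : Prop :=
  a ∈ p ∧ b ∈ p ∧ p.idxOf a < p.idxOf b

namespace IONetwork

variable {V : Type}

/-- An ιo-simple path: a directed path from the input node to the output node
with pairwise distinct nodes. -/
def IsIOSimplePath (G : IONetwork V) (p : List V) : Prop :=
  p.Chain' G.edge ∧ p.head? = some G.inp ∧ p.getLast? = some G.out ∧ p.Nodup

/-- A core network: every node is downstream from the input node and upstream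
from the output node. -/
def IsCore (G : IONetwork V) : Prop :=
  ∀ v : V, Relation.ReflTransGen G.edge G.inp v ∧ Relation.ReflTransGen G.edge v G.out

/-- A simple node: a node lying on some ιo-simple path. -/
def SimpleNode (G : IONetwork V) (v : V) : Prop :=
  ∃ p, G.IsIOSimplePath p ∧ v ∈ p

/-- A super-simple node: a node lying on every ιo-simple path. -/
def SuperSimple (G : IONetwork V) (v : V) : Prop :=
  ∀ p, G.IsIOSimplePath p → v ∈ p

/-- Two super-simple nodes are adjacent (with `a` upstream of `b`) if every ιo-simple
path visits `a` strictly before `b` and no super-simple node occurs strictly between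
them on an ιo-simple path. -/
def SSAdjacent [DecidableEq V] (G : IONetwork V) (a b : V) : Prop :=
  G.SuperSimple a ∧ G.SuperSimple b ∧ a ≠ b ∧
  (∀ p, G.IsIOSimplePath p → Before p a b) ∧
  (∀ c, G.SuperSimple c → ∀ p, G.IsIOSimplePath p → ¬ (Before p a c ∧ Before p c b))

/-- The node `v` belongs to the super-simple subnetwork `L(a,b)` determined by adjacent
super-simple nodes `a`, `b`: either it is one of the endpoints or some ιo-simple path
visits `a`, `v`, `b` in that order. -/
def InL [DecidableEq V] (G : IONetwork V) (a b v : V) : Prop :=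
  v = a ∨ v = b ∨ ∃ p, G.IsIOSimplePath p ∧ Before p a v ∧ Before p v b

/-- An appendage path component: a strongly connected component of the appendage
subnetwork (the induced subnetwork on the nodes lying on no ιo-simple path). -/
def IsAppendagePathComponent (G : IONetwork V) (K : Set V) : Prop :=
  K.Nonempty ∧ (∀ v ∈ K, ¬ G.SimpleNode v) ∧
  (∀ a ∈ K, ∀ b ∈ K, RestrictedReach G.edge {v | ¬ G.SimpleNode v} a b) ∧
  (∀ v, ¬ G.SimpleNode v →
    (∃ a ∈ K, RestrictedReach G.edge {v | ¬ G.SimpleNode v} a v ∧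
              RestrictedReach G.edge {v | ¬ G.SimpleNode v} v a) → v ∈ K)

/-- The no-cycle condition for a set `K` of appendage nodes: no cycle of `G` contains
both a node of `K` and a simple node but no super-simple node. -/
def NoCycleCond (G : IONetwork V) (K : Set V) : Prop :=
  ¬ ∃ γ : List V, IsCycle G.edge γ ∧ (∃ v ∈ γ, v ∈ K) ∧
    (∃ v ∈ γ, G.SimpleNode v) ∧ (∀ v ∈ γ, ¬ G.SuperSimple v)

/-- The node set of the structural subnetwork `S_G`: all simple nodes together with all
nodes of cycle appendage path components (those violating the no-cycle condition). -/
def StructuralSet (G : IONetwork V) : Set V :=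
  {v | G.SimpleNode v ∨
    ∃ K : Set V, G.IsAppendagePathComponent K ∧ ¬ G.NoCycleCond K ∧ v ∈ K}

/-- The node set of the super-simple structural subnetwork `L'(a,b)`: the simple nodes of
`L(a,b)` together with all appendage nodes lying on a cycle of `G` containing a simple
node of `L(a,b)` but no super-simple node. -/
def LpSet [DecidableEq V] (G : IONetwork V) (a b : V) : Set V :=
  {v | G.InL a b v} ∪
  {v | ¬ G.SimpleNode v ∧ ∃ γ : List V, IsCycle G.edge γ ∧ v ∈ γ ∧
        (∃ w ∈ γ, G.InL a b w ∧ G.SimpleNode w) ∧ ∀ w ∈ γ, ¬ G.SuperSimple w}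

/-- The generic entry associated to the ordered pair of nodes `(c, r)` (source `c`,
target `r`): the coupling/self-coupling indeterminate `x_{c,r}` if `c = r` or there is
an arrow `c → r`, and `0` otherwise. -/
noncomputable def genEntry (G : IONetwork V) (c r : V) : MvPolynomial (V × V) ℚ :=
  if c = r ∨ G.edge c r then MvPolynomial.X (c, r) else 0

/-- The generic Jacobian of the induced subnetwork on `W` (rows = targets, columns =
sources). -/
noncomputable def genJac (G : IONetwork V) (W : Set V) :
    Matrix ↥W ↥W (MvPolynomial (V × V) ℚ) :=
  Matrix.of fun r c => G.genEntry c.1 r.1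

/-- The generic homeostasis matrix of `G`: the generic Jacobian on `V` with the row of
the input node and the column of the output node deleted. -/
noncomputable def genH (G : IONetwork V) :
    Matrix {v : V // v ≠ G.inp} {v : V // v ≠ G.out} (MvPolynomial (V × V) ℚ) :=
  Matrix.of fun r c => G.genEntry c.1 r.1

/-- The determinant of the generic homeostasis matrix of `G`, computed after fixing a
bijection `V∖{o} ≃ V∖{ι}`. -/
noncomputable def detH [Fintype V] (G : IONetwork V)
    (e : {v : V // v ≠ G.out} ≃ {v : V // v ≠ G.inp}) : MvPolynomial (V × V) ℚ :=
  Matrix.det (Matrix.of fun r c : {v : V // v ≠ G.out} => G.genH (e r) c)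

/-- The determinant of the generic homeostasis matrix of the induced input-output
subnetwork on `W` with input node `a` and output node `b`, computed after fixing a
bijection `W∖{b} ≃ W∖{a}`. -/
noncomputable def subDetH [Fintype V] (G : IONetwork V) (W : Set V) (a b : V)
    (e : {v : V // v ∈ W ∧ v ≠ b} ≃ {v : V // v ∈ W ∧ v ≠ a}) :
    MvPolynomial (V × V) ℚ :=
  Matrix.det (Matrix.of fun r c : {v : V // v ∈ W ∧ v ≠ b} =>
    G.genEntry c.1 (e r).1)

end IONetwork

/-- The product of the coupling indeterminates along the consecutive arrows of a path
(given as a list of nodes). -/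
noncomputable def pathProd {V : Type} (p : List V) : MvPolynomial (V × V) ℚ :=
  ((p.zip p.tail).map fun ab => MvPolynomial.X ab).prod

/-! ### Auxiliary machinery for the determinant formula -/

namespace SDAux

open Equiv List Finset

variable {V : Type} [Fintype V] [DecidableEq V] (G : IONetwork V)

/-- The lists that are candidates for ιo-simple paths: nodup, starting at the input,
ending at the output (but not necessarily following arrows). -/
def IsQ (q : List V) : Prop :=
  q.Nodup ∧ q.head? = some G.inp ∧ q.getLast? = some G.out

variable {G}

lemma IsQ.ne_nil {q : List V} (h : IsQ G q) : q ≠ [] := by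
  rintro rfl; simpa [IsQ] using h

lemma IsQ.len_pos {q : List V} (h : IsQ G q) : 0 < q.length :=
  List.length_pos_iff.2 h.ne_nil

lemma IsQ.getElem_zero {q : List V} (h : IsQ G q) : q[0]'h.len_pos = G.inp := by
  have h2 := h.2.1
  rw [List.head?_eq_head h.ne_nil, Option.some_inj] at h2
  rw [← h2, List.head_eq_getElem_zero]

lemma IsQ.getElem_last {q : List V} (h : IsQ G q) :
    q[q.length - 1]'(by have := h.len_pos; omega) = G.out := by
  have h2 := h.2.2
  rw [List.getLast?_eq_getLast_of_ne_nil h.ne_nil, Option.some_inj] at h2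
  rw [← h2, List.getLast_eq_getElem]

lemma IsQ.inp_mem {q : List V} (h : IsQ G q) : G.inp ∈ q := by
  rw [← h.getElem_zero]; exact List.getElem_mem _

lemma IsQ.out_mem {q : List V} (h : IsQ G q) : G.out ∈ q := by
  rw [← h.getElem_last]; exact List.getElem_mem _

lemma IsQ.getElem_ne_out {q : List V} (h : IsQ G q) {i : ℕ} (hi : i + 1 < q.length) :
    q[i]'(by omega) ≠ G.out := by
  intro hout
  have h1 : q.idxOf (q[i]'(by omega)) = i := List.Nodup.idxOf_getElem h.1 i (by omega)
  have h2 : q.idxOf (q[q.length-1]'(by omega)) = q.length - 1 :=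
    List.Nodup.idxOf_getElem h.1 _ (by omega)
  rw [h.getElem_last] at h2
  rw [hout, h2] at h1
  omega

lemma IsQ.getElem_ne_inp {q : List V} (h : IsQ G q) {i : ℕ} (hi0 : 0 < i) (hi : i < q.length) :
    q[i]'hi ≠ G.inp := by
  intro hinp
  have h1 : q.idxOf (q[i]'hi) = i := List.Nodup.idxOf_getElem h.1 i hi
  have h2 : q.idxOf (q[0]'h.len_pos) = 0 := List.Nodup.idxOf_getElem h.1 _ h.len_pos
  rw [h.getElem_zero] at h2
  rw [hinp, h2] at h1
  omega

lemma IsQ.indexOf_add_one_lt {q : List V} (h : IsQ G q) {v : V} (hv : v ∈ q)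
    (hne : v ≠ G.out) : q.idxOf v + 1 < q.length := by
  have h1 : q.idxOf v < q.length := List.idxOf_lt_length_iff.2 hv
  rcases Nat.lt_or_ge (q.idxOf v + 1) q.length with h2 | h2
  · exact h2
  · exfalso
    have hg : q[q.idxOf v]? = some v := by
      rw [List.getElem?_eq_getElem h1, List.getElem_idxOf h1]
    have hl : q[q.length - 1]? = some G.out := by
      rw [List.getElem?_eq_getElem (show q.length - 1 < q.length by omega), h.getElem_last]
    rw [show q.idxOf v = q.length - 1 from by omega, hl] at hg
    exact hne (Option.some_inj.1 hg.symm)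

/-- The successor of `v` along the list `q`. -/
def nxt (q : List V) (v : V) : V := q.getD (q.idxOf v + 1) v

lemma nxt_getElem {q : List V} (hnd : q.Nodup) {i : ℕ} (hi : i + 1 < q.length) :
    nxt q (q[i]'(by omega)) = q[i+1]'hi := by
  unfold nxt
  rw [List.Nodup.idxOf_getElem hnd i (by omega), List.getD_eq_getElem _ _ hi]

lemma IsQ.exists_index {q : List V} (h : IsQ G q) {v : V} (hv : v ∈ q) (hne : v ≠ G.out) :
    ∃ i : ℕ, ∃ hi : i + 1 < q.length, v = q[i]'(by omega) ∧ nxt q v = q[i+1]'hi := by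
  refine ⟨q.idxOf v, h.indexOf_add_one_lt hv hne, (List.getElem_idxOf _).symm, ?_⟩
  have hg : q[q.idxOf v]'(List.idxOf_lt_length_iff.2 hv) = v := List.getElem_idxOf _
  conv_lhs => rw [← hg]
  exact nxt_getElem h.1 (h.indexOf_add_one_lt hv hne)

lemma IsQ.nxt_mem {q : List V} (h : IsQ G q) {v : V} (hv : v ∈ q) (hne : v ≠ G.out) :
    nxt q v ∈ q := by
  obtain ⟨i, hi, -, h2⟩ := h.exists_index hv hne
  rw [h2]; exact List.getElem_mem _

lemma IsQ.nxt_ne_inp {q : List V} (h : IsQ G q) {v : V} (hv : v ∈ q) (hne : v ≠ G.out) :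
    nxt q v ≠ G.inp := by
  obtain ⟨i, hi, -, h2⟩ := h.exists_index hv hne
  rw [h2]; exact h.getElem_ne_inp (by omega) hi

lemma IsQ.nxt_inj {q : List V} (h : IsQ G q) {v w : V} (hv : v ∈ q) (hnev : v ≠ G.out)
    (hw : w ∈ q) (hnew : w ≠ G.out) (heq : nxt q v = nxt q w) : v = w := by
  obtain ⟨i, hi, hvi, h2⟩ := h.exists_index hv hnev
  obtain ⟨j, hj, hwj, h3⟩ := h.exists_index hw hnew
  rw [h2, h3] at heq
  have : i + 1 = j + 1 := by
    have a1 := List.Nodup.idxOf_getElem h.1 (i+1) hi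
    have a2 := List.Nodup.idxOf_getElem h.1 (j+1) hj
    rw [heq] at a1; omega
  subst hvi hwj; congr 1; omega

/-- The "target" map on nodes determined by a list `q` and a permutation of its
complement. -/
def tgt (q : List V) (π : Equiv.Perm {v : V // v ∉ q}) (v : V) : V :=
  if h : v ∈ q then nxt q v else (π ⟨v, h⟩).1

lemma tgt_ne_inp {q : List V} (h : IsQ G q) (π : Equiv.Perm {v : V // v ∉ q}) {v : V}
    (hv : v ≠ G.out) : tgt q π v ≠ G.inp := by
  unfold tgt
  split
  · exact h.nxt_ne_inp ‹_› hv
  · exact fun hc => (π ⟨v, ‹_›⟩).2 (hc ▸ h.inp_mem)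

lemma tgt_mem_iff {q : List V} (h : IsQ G q) (π : Equiv.Perm {v : V // v ∉ q}) {v : V}
    (hv : v ≠ G.out) : tgt q π v ∈ q ↔ v ∈ q := by
  unfold tgt
  split
  · exact iff_of_true (h.nxt_mem ‹_› hv) ‹_›
  · exact iff_of_false (π ⟨v, ‹_›⟩).2 ‹_›

lemma tgt_inj {q : List V} (h : IsQ G q) (π : Equiv.Perm {v : V // v ∉ q}) {v w : V}
    (hv : v ≠ G.out) (hw : w ≠ G.out) (heq : tgt q π v = tgt q π w) : v = w := by
  by_cases h1 : v ∈ q <;> by_cases h2 : w ∈ q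
  · rw [tgt, tgt, dif_pos h1, dif_pos h2] at heq
    exact h.nxt_inj h1 hv h2 hw heq
  · exfalso
    apply h2
    rw [← tgt_mem_iff h π hw, ← heq, tgt_mem_iff h π hv]
    exact h1
  · exfalso
    apply h1
    rw [← tgt_mem_iff h π hv, heq, tgt_mem_iff h π hw]
    exact h2
  · rw [tgt, tgt, dif_neg h1, dif_neg h2] at heq
    have : (⟨v, h1⟩ : {v : V // v ∉ q}) = ⟨w, h2⟩ := π.injective (Subtype.ext heq)
    exact congrArg Subtype.val this

variable (e : {v : V // v ≠ G.out} ≃ {v : V // v ≠ G.inp})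

/-- The permutation of `V ∖ {o}` associated to a candidate path `q` and a permutation
of its complement. -/
noncomputable def sigmaOf (q : List V) (hq : IsQ G q) (π : Equiv.Perm {v : V // v ∉ q}) :
    Equiv.Perm {v : V // v ≠ G.out} :=
  Equiv.ofBijective (fun c => e.symm ⟨tgt q π c.1, tgt_ne_inp hq π c.2⟩)
    (Finite.injective_iff_bijective.1 (fun c d hcd => by
      apply Subtype.ext
      have := e.symm.injective hcd
      exact tgt_inj hq π c.2 d.2 (congrArg Subtype.val this)))

lemma e_sigmaOf (q : List V) (hq : IsQ G q) (π : Equiv.Perm {v : V // v ∉ q})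
    (c : {v : V // v ≠ G.out}) :
    ((e (sigmaOf e q hq π c)).1 : V) = tgt q π c.1 := by
  simp [sigmaOf, Equiv.ofBijective_apply]

/-- Complement-of-`q` nodes, viewed inside `V ∖ {o}`. -/
def complEquiv (q : List V) (hq : IsQ G q) :
    {v : V // v ∉ q} ≃ {c : {v : V // v ≠ G.out} // c.1 ∉ q} where
  toFun v := ⟨⟨v.1, fun h => v.2 (h ▸ hq.out_mem)⟩, v.2⟩
  invFun c := ⟨c.1.1, c.2⟩
  left_inv _ := rfl
  right_inv _ := rfl

lemma sigmaOf_mul (q : List V) (hq : IsQ G q) (π : Equiv.Perm {v : V // v ∉ q}) :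
    sigmaOf e q hq π = sigmaOf e q hq 1 * π.extendDomain (complEquiv q hq) := by
  ext c
  rw [Equiv.Perm.mul_apply]
  by_cases h : c.1 ∈ q
  · rw [Equiv.Perm.extendDomain_apply_not_subtype _ (complEquiv q hq) (by simpa using h)]
    simp only [sigmaOf, Equiv.ofBijective_apply, tgt, dif_pos h]
  · rw [Equiv.Perm.extendDomain_apply_subtype _ (complEquiv q hq) (by simpa using h)]
    refine congrArg Subtype.val (e.injective (Subtype.ext ?_))
    rw [e_sigmaOf, e_sigmaOf]
    rw [tgt, dif_neg h, tgt]
    split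
    · exact absurd ‹_› ((complEquiv q hq) _).2
    · rfl

lemma sign_sigmaOf (q : List V) (hq : IsQ G q) (π : Equiv.Perm {v : V // v ∉ q}) :
    Equiv.Perm.sign (sigmaOf e q hq π)
      = Equiv.Perm.sign (sigmaOf e q hq 1) * Equiv.Perm.sign π := by
  rw [sigmaOf_mul e q hq π, map_mul, Equiv.Perm.sign_extendDomain]

/-! #### Extracting the path and complement permutation from a permutation -/

variable (σ : Equiv.Perm {v : V // v ≠ G.out})

/-- The map `V → V` induced by a permutation of `V ∖ {o}` (fixing `o`). -/
noncomputable def gOf : V → V :=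
  fun v => if h : v ≠ G.out then (e (σ ⟨v, h⟩)).1 else v

lemma gOf_ne_inp {v : V} (hv : v ≠ G.out) : gOf e σ v ≠ G.inp := by
  rw [gOf, dif_pos hv]; exact (e (σ ⟨v, hv⟩)).2

lemma gOf_inj {v w : V} (hv : v ≠ G.out) (hw : w ≠ G.out)
    (h : gOf e σ v = gOf e σ w) : v = w := by
  simp only [gOf] at h
  rw [dif_pos hv, dif_pos hw] at h
  have := σ.injective (e.injective (Subtype.ext h))
  exact congrArg Subtype.val this

lemma gOf_cancel : ∀ i d : ℕ, (∀ k ≤ i + d, (gOf e σ)^[k] G.inp ≠ G.out) →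
    (gOf e σ)^[i + d] G.inp = (gOf e σ)^[i] G.inp → (gOf e σ)^[d] G.inp = G.inp
  | 0, d, _, h => by simpa using h
  | (i+1), d, hk, h => by
    rw [show i + 1 + d = (i + d) + 1 by omega, Function.iterate_succ_apply',
      Function.iterate_succ_apply'] at h
    exact gOf_cancel i d (fun k hk' => hk k (by omega))
      (gOf_inj e σ (hk _ (by omega)) (hk _ (by omega)) h)

lemma gOf_iterate_ne_of_lt {i j : ℕ} (hij : i < j)
    (hk : ∀ k ≤ j, (gOf e σ)^[k] G.inp ≠ G.out) :
    (gOf e σ)^[i] G.inp ≠ (gOf e σ)^[j] G.inp := by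
  intro h
  have h' : (gOf e σ)^[i + (j - i)] G.inp = (gOf e σ)^[i] G.inp := by
    rw [show i + (j - i) = j by omega]; exact h.symm
  have h2 := gOf_cancel e σ i (j - i) (fun k hk' => hk k (by omega)) h'
  obtain ⟨m, hm⟩ : ∃ m, j - i = m + 1 := ⟨j - i - 1, by omega⟩
  rw [hm, Function.iterate_succ_apply'] at h2
  exact gOf_ne_inp e σ (hk m (by omega)) h2

lemma exists_hit : ∃ k, (gOf e σ)^[k] G.inp = G.out := by
  by_contra hcon
  push_neg at hcon
  obtain ⟨i, j, hne, hij⟩ := Fintype.exists_ne_map_eq_of_card_lt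
    (fun k : Fin (Fintype.card V + 1) => (gOf e σ)^[(k : ℕ)] G.inp) (by simp)
  rcases hne.lt_or_gt with h | h
  · exact gOf_iterate_ne_of_lt e σ (by exact_mod_cast h) (fun k _ => hcon k) hij
  · exact gOf_iterate_ne_of_lt e σ (by exact_mod_cast h) (fun k _ => hcon k) hij.symm

/-- The number of steps from the input to the output along `σ`'s orbit. -/
noncomputable def nOf : ℕ := Nat.find (exists_hit e σ)

lemma nOf_spec : (gOf e σ)^[nOf e σ] G.inp = G.out := Nat.find_spec (exists_hit e σ)

lemma nOf_min {k : ℕ} (hk : k < nOf e σ) : (gOf e σ)^[k] G.inp ≠ G.out :=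
  Nat.find_min (exists_hit e σ) hk

/-- The candidate path extracted from `σ`: the orbit of the input node. -/
noncomputable def qOf : List V :=
  (List.range (nOf e σ + 1)).map fun k => (gOf e σ)^[k] G.inp

lemma length_qOf : (qOf e σ).length = nOf e σ + 1 := by simp [qOf]

lemma getElem_qOf {i : ℕ} (hi : i < nOf e σ + 1) :
    (qOf e σ)[i]'(by simpa [qOf] using hi) = (gOf e σ)^[i] G.inp := by
  simp only [qOf]
  rw [List.getElem_map, List.getElem_range]

lemma mem_qOf {v : V} : v ∈ qOf e σ ↔ ∃ k ≤ nOf e σ, (gOf e σ)^[k] G.inp = v := by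
  simp only [qOf]
  rw [List.mem_map]
  constructor
  · rintro ⟨k, hk, rfl⟩
    exact ⟨k, by simpa [Nat.lt_succ_iff] using List.mem_range.1 hk, rfl⟩
  · rintro ⟨k, hk, rfl⟩
    exact ⟨k, List.mem_range.2 (by omega), rfl⟩

lemma isQ_qOf : IsQ G (qOf e σ) := by
  have hne : qOf e σ ≠ [] := by
    intro h
    have := length_qOf e σ
    rw [h] at this
    simp at this
  refine ⟨?_, ?_, ?_⟩
  · apply List.Nodup.map_on _ List.nodup_range
    intro i hi j hj hij
    simp only [List.mem_range, Nat.lt_succ_iff] at hi hj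
    by_contra hne'
    rcases Nat.lt_or_ge i j with h | h
    · have hj' : j ≠ nOf e σ ∨ j = nOf e σ := by omega
      have : j < nOf e σ ∨ j = nOf e σ := by omega
      rcases this with h' | h'
      · exact gOf_iterate_ne_of_lt e σ h (fun k hk => nOf_min e σ (by omega)) hij
      · subst h'
        rw [nOf_spec e σ] at hij
        exact nOf_min e σ h hij
    · have h' : j < i := by omega
      rcases (show i < nOf e σ ∨ i = nOf e σ by omega) with h'' | h''
      · exact gOf_iterate_ne_of_lt e σ h' (fun k hk => nOf_min e σ (by omega)) hij.symm
      · subst h''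
        rw [nOf_spec e σ] at hij
        exact nOf_min e σ h' hij.symm
  · rw [List.head?_eq_head hne, Option.some_inj, List.head_eq_getElem_zero hne,
      getElem_qOf e σ (by omega)]
    simp
  · rw [List.getLast?_eq_getElem?, length_qOf, Nat.add_sub_cancel,
      List.getElem?_eq_getElem (by rw [length_qOf]; omega), getElem_qOf e σ (by omega),
      nOf_spec]

lemma gOf_not_mem {v : V} (hv : v ∉ qOf e σ) : gOf e σ v ∉ qOf e σ := by
  have hvout : v ≠ G.out := fun h => hv (h ▸ (isQ_qOf e σ).out_mem)
  intro hmem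
  rw [mem_qOf] at hmem
  obtain ⟨k, hk, hkv⟩ := hmem
  cases k with
  | zero => exact gOf_ne_inp e σ hvout hkv.symm
  | succ k =>
    rw [Function.iterate_succ_apply'] at hkv
    have hkne : (gOf e σ)^[k] G.inp ≠ G.out := nOf_min e σ (by omega)
    have hveq := gOf_inj e σ hkne hvout hkv
    exact hv ((mem_qOf e σ).2 ⟨k, by omega, hveq⟩)

/-- The permutation of the complement of the extracted path. -/
noncomputable def piOf : Equiv.Perm {v : V // v ∉ qOf e σ} :=
  Equiv.ofBijective (fun v => ⟨gOf e σ v.1, gOf_not_mem e σ v.2⟩)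
    (Finite.injective_iff_bijective.1 (fun v w hvw => by
      apply Subtype.ext
      exact gOf_inj e σ (fun h => v.2 (h ▸ (isQ_qOf e σ).out_mem))
        (fun h => w.2 (h ▸ (isQ_qOf e σ).out_mem)) (congrArg Subtype.val hvw)))

/-- Right inverse: reassembling the extracted data gives back `σ`. -/
lemma sigmaOf_qOf_piOf : sigmaOf e (qOf e σ) (isQ_qOf e σ) (piOf e σ) = σ := by
  ext c
  show ((sigmaOf e (qOf e σ) (isQ_qOf e σ) (piOf e σ) c) : V) = ((σ c) : V)
  have key : tgt (qOf e σ) (piOf e σ) c.1 = gOf e σ c.1 := by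
    by_cases h : c.1 ∈ qOf e σ
    · rw [mem_qOf] at h
      obtain ⟨i, hi, hiv⟩ := h
      have hine : i ≠ nOf e σ := by
        intro h'
        subst h'
        rw [nOf_spec e σ] at hiv
        exact c.2 hiv.symm
      have hi' : i + 1 < (qOf e σ).length := by rw [length_qOf]; omega
      have hci : c.1 = (qOf e σ)[i]'(by rw [length_qOf]; omega) := by
        rw [getElem_qOf e σ (by omega)]; exact hiv.symm
      rw [tgt, dif_pos (by rw [mem_qOf]; exact ⟨i, hi, hiv⟩)]
      have h1 : nxt (qOf e σ) c.1 = (qOf e σ)[i+1]'hi' := by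
        rw [hci]
        exact nxt_getElem (isQ_qOf e σ).1 hi'
      rw [h1, getElem_qOf e σ (by rw [length_qOf] at hi'; omega),
        Function.iterate_succ_apply', hiv]
    · rw [tgt, dif_neg h]
      rfl
  have : sigmaOf e (qOf e σ) (isQ_qOf e σ) (piOf e σ) c
      = e.symm ⟨tgt (qOf e σ) (piOf e σ) c.1, tgt_ne_inp (isQ_qOf e σ) _ c.2⟩ := rfl
  rw [this]
  have hg : gOf e σ c.1 = (e (σ c)).1 := by
    rw [gOf, dif_pos c.2]
  have : (⟨tgt (qOf e σ) (piOf e σ) c.1, tgt_ne_inp (isQ_qOf e σ) _ c.2⟩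
      : {v : V // v ≠ G.inp}) = e (σ c) := Subtype.ext (key.trans hg)
  rw [this, Equiv.symm_apply_apply]

/-- The induced map on `V` of a reassembled permutation is the target map. -/
lemma gOf_sigmaOf (q : List V) (hq : IsQ G q) (π : Equiv.Perm {v : V // v ∉ q}) {v : V}
    (hv : v ≠ G.out) : gOf e (sigmaOf e q hq π) v = tgt q π v := by
  rw [gOf, dif_pos hv]
  exact e_sigmaOf e q hq π ⟨v, hv⟩

lemma iterate_sigmaOf (q : List V) (hq : IsQ G q) (π : Equiv.Perm {v : V // v ∉ q}) :
    ∀ i, (hi : i < q.length) → (gOf e (sigmaOf e q hq π))^[i] G.inp = q[i]'hi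
  | 0, hi => by rw [Function.iterate_zero_apply, hq.getElem_zero]
  | (i+1), hi => by
    rw [Function.iterate_succ_apply', iterate_sigmaOf q hq π i (by omega),
      gOf_sigmaOf e q hq π (hq.getElem_ne_out hi), tgt,
      dif_pos (List.getElem_mem _), nxt_getElem hq.1 hi]

lemma nOf_sigmaOf (q : List V) (hq : IsQ G q) (π : Equiv.Perm {v : V // v ∉ q}) :
    nOf e (sigmaOf e q hq π) = q.length - 1 := by
  have hspec : (gOf e (sigmaOf e q hq π))^[q.length - 1] G.inp = G.out := by
    rw [iterate_sigmaOf e q hq π _ (by have := hq.len_pos; omega)]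
    exact hq.getElem_last
  refine Nat.le_antisymm (Nat.find_le hspec) ?_
  by_contra hcon
  push_neg at hcon
  have h2 : nOf e (sigmaOf e q hq π) + 1 < q.length := by have := hq.len_pos; omega
  have h1 := nOf_spec e (sigmaOf e q hq π)
  rw [iterate_sigmaOf e q hq π _ (by omega)] at h1
  exact hq.getElem_ne_out h2 h1

/-- Left inverse: extracting from a reassembled permutation gives back the path. -/
lemma qOf_sigmaOf (q : List V) (hq : IsQ G q) (π : Equiv.Perm {v : V // v ∉ q}) :
    qOf e (sigmaOf e q hq π) = q := by
  apply List.ext_getElem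
  · rw [length_qOf, nOf_sigmaOf]
    have := hq.len_pos; omega
  · intro i h1 h2
    rw [getElem_qOf e _ (by rw [← length_qOf]; omega), iterate_sigmaOf e q hq π i h2]

/-! #### Lists, zips and products -/

lemma length_zip_tail (q : List V) : (q.zip q.tail).length = q.length - 1 := by
  rw [List.length_zip, List.length_tail]
  omega

lemma getElem_zip_tail (q : List V) {i : ℕ} (h : i + 1 < q.length) :
    (q.zip q.tail)[i]'(by rw [length_zip_tail]; omega) = (q[i]'(by omega), q[i+1]'h) := by
  rw [List.getElem_zip]
  congr 1
  rw [List.getElem_tail]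

lemma mem_zip_tail {q : List V} {ab : V × V} :
    ab ∈ q.zip q.tail ↔ ∃ i : ℕ, ∃ h : i + 1 < q.length,
      ab = (q[i]'(by omega), q[i+1]'h) := by
  rw [List.mem_iff_getElem]
  constructor
  · rintro ⟨i, hi, hab⟩
    have hi' : i + 1 < q.length := by rw [length_zip_tail] at hi; omega
    refine ⟨i, hi', ?_⟩
    rw [← hab, getElem_zip_tail q hi']
  · rintro ⟨i, hi, rfl⟩
    exact ⟨i, by rw [length_zip_tail]; omega, getElem_zip_tail q hi⟩

lemma map_fst_zip_tail : ∀ q : List V, (q.zip q.tail).map Prod.fst = q.take (q.length - 1)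
  | [] => rfl
  | [a] => rfl
  | a :: b :: t => by
    have ih := map_fst_zip_tail (b :: t)
    simp only [List.tail_cons, List.zip_cons_cons, List.map_cons]
    rw [show ((b :: t).zip t) = ((b :: t).zip (b :: t).tail) from rfl, ih]
    simp only [List.length_cons, Nat.succ_sub_one]
    rw [List.take_succ_cons]

lemma nodup_zip_tail {q : List V} (h : q.Nodup) : (q.zip q.tail).Nodup := by
  apply List.Nodup.of_map Prod.fst
  rw [map_fst_zip_tail]
  exact List.Nodup.sublist (List.take_sublist _ _) h

lemma chain'_of_forall_zip {E : V → V → Prop} :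
    ∀ {l : List V}, (∀ ab ∈ l.zip l.tail, E ab.1 ab.2) → l.Chain' E
  | [], _ => List.isChain_nil
  | [a], _ => List.isChain_singleton a
  | a :: b :: t, h => by
    rw [List.Chain', List.isChain_cons_cons]
    refine ⟨h (a, b) (by simp), chain'_of_forall_zip (fun ab hab => h ab ?_)⟩
    rw [List.tail_cons, List.zip_cons_cons]
    exact List.mem_cons_of_mem _ hab

/-! #### The finset of candidate paths, signs and products -/

variable (G) in
/-- The finset of candidate paths. -/
noncomputable def QF : Finset (List V) :=
  ((Finset.univ : Finset {l : List V // l.Nodup}).image Subtype.val).filter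
    (fun l => l.head? = some G.inp ∧ l.getLast? = some G.out)

lemma mem_QF {q : List V} : q ∈ QF G ↔ IsQ G q := by
  simp only [QF, Finset.mem_filter, Finset.mem_image, Finset.mem_univ, true_and, IsQ]
  constructor
  · rintro ⟨⟨a, rfl⟩, h1, h2⟩
    exact ⟨a.2, h1, h2⟩
  · rintro ⟨h0, h1, h2⟩
    exact ⟨⟨⟨q, h0⟩, rfl⟩, h1, h2⟩

variable (G) in
/-- The sign attached to a candidate path. -/
noncomputable def epsQ : List V → MvPolynomial (V × V) ℚ := fun q =>
  if h : IsQ G q then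
    (((Equiv.Perm.sign (sigmaOf e q h (1 : Equiv.Perm {v : V // v ∉ q})) : ℤˣ) : ℤ)
      : MvPolynomial (V × V) ℚ)
  else 1

lemma epsQ_eq {q : List V} (h : IsQ G q) :
    epsQ G e q = (((Equiv.Perm.sign (sigmaOf e q h (1 : Equiv.Perm {v : V // v ∉ q})) : ℤˣ)
      : ℤ) : MvPolynomial (V × V) ℚ) := by
  simp only [epsQ]
  rw [dif_pos h]

lemma epsQ_one_or_neg_one {q : List V} (h : IsQ G q) :
    epsQ G e q = 1 ∨ epsQ G e q = -1 := by
  rcases Int.units_eq_one_or (Equiv.Perm.sign (sigmaOf e q h 1)) with h' | h' <;>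
    rw [epsQ_eq e h, h'] <;> simp

variable (G) in
/-- The product of the generic entries along a candidate path. -/
noncomputable def FProd (q : List V) : MvPolynomial (V × V) ℚ :=
  ∏ c ∈ Finset.univ.filter (fun c : {v : V // v ≠ G.out} => c.1 ∈ q),
    G.genEntry c.1 (nxt q c.1)

variable (G) in
/-- The list-level product of the generic entries along a candidate path. -/
noncomputable def Flist (q : List V) : MvPolynomial (V × V) ℚ :=
  ((q.zip q.tail).map fun ab => G.genEntry ab.1 ab.2).prod

lemma FProd_eq_Flist {q : List V} (hq : IsQ G q) : FProd G q = Flist G q := by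
  rw [Flist, ← List.prod_toFinset _ (nodup_zip_tail hq.1)]
  refine Finset.prod_bij (fun c _ => (c.1, nxt q c.1)) ?_ ?_ ?_ ?_
  · intro a ha
    rw [Finset.mem_filter] at ha
    obtain ⟨i, hi, hai, hni⟩ := hq.exists_index ha.2 a.2
    rw [List.mem_toFinset, mem_zip_tail]
    exact ⟨i, hi, by rw [← hai, ← hni]⟩
  · intro a ha b hb hab
    exact Subtype.ext (congrArg Prod.fst hab)
  · intro ab hab
    rw [List.mem_toFinset, mem_zip_tail] at hab
    obtain ⟨i, hi, rfl⟩ := hab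
    refine ⟨⟨q[i]'(by omega), hq.getElem_ne_out hi⟩,
      by rw [Finset.mem_filter]; exact ⟨Finset.mem_univ _, List.getElem_mem _⟩, ?_⟩
    dsimp only
    rw [nxt_getElem hq.1 hi]
  · intro a ha
    rfl

lemma Flist_eq_pathProd {q : List V} (hc : q.Chain' G.edge) : Flist G q = pathProd q := by
  rw [Flist, pathProd]
  congr 1
  apply List.map_congr_left
  intro ab hab
  obtain ⟨i, hi, rfl⟩ := mem_zip_tail.1 hab
  have hedge : G.edge (q[i]'(by omega)) (q[i+1]'hi) :=
    List.isChain_iff_getElem.1 hc i (by omega)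
  rw [IONetwork.genEntry, if_pos (Or.inr hedge)]

lemma Flist_eq_zero {q : List V} (hq : IsQ G q) (hnc : ¬ q.Chain' G.edge) :
    Flist G q = 0 := by
  have h1 : ¬ ∀ ab ∈ q.zip q.tail, G.edge ab.1 ab.2 :=
    fun h => hnc (chain'_of_forall_zip h)
  push_neg at h1
  obtain ⟨ab, hab, hne⟩ := h1
  apply List.prod_eq_zero
  rw [List.mem_map]
  refine ⟨ab, hab, ?_⟩
  obtain ⟨i, hi, rfl⟩ := mem_zip_tail.1 hab
  have hd : (q[i]'(by omega)) ≠ q[i+1]'hi := by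
    intro h
    have a1 := List.Nodup.idxOf_getElem hq.1 i (by omega)
    have a2 := List.Nodup.idxOf_getElem hq.1 (i+1) hi
    rw [h] at a1
    omega
  rw [IONetwork.genEntry, if_neg (by push_neg; exact ⟨hd, hne⟩)]

lemma prod_tgt_split (q : List V) (hq : IsQ G q) (π : Equiv.Perm {v : V // v ∉ q}) :
    (∏ c : {v : V // v ≠ G.out}, G.genEntry c.1 (tgt q π c.1))
      = FProd G q * ∏ w : {v : V // v ∉ q}, G.genEntry w.1 (π w).1 := by
  rw [← Finset.prod_filter_mul_prod_filter_not Finset.univ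
    (fun c : {v : V // v ≠ G.out} => c.1 ∈ q)]
  congr 1
  · rw [FProd]
    refine Finset.prod_congr rfl (fun c hc => ?_)
    rw [Finset.mem_filter] at hc
    rw [tgt, dif_pos hc.2]
  · refine (Finset.prod_bij
      (fun (w : {v : V // v ∉ q}) _ =>
        (⟨w.1, fun h => w.2 (h ▸ hq.out_mem)⟩ : {v : V // v ≠ G.out})) ?_ ?_ ?_ ?_).symm
    · intro w _
      rw [Finset.mem_filter]
      exact ⟨Finset.mem_univ _, w.2⟩
    · intro a _ b _ hab
      have h' := congrArg Subtype.val hab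
      exact Subtype.ext h'
    · intro c hc
      rw [Finset.mem_filter] at hc
      exact ⟨⟨c.1, hc.2⟩, Finset.mem_univ _, rfl⟩
    · intro w _
      rw [tgt, dif_neg w.2]

lemma detJ_eq (q : List V) :
    (G.genJac {v : V | v ∉ q}).det
      = ∑ π : Equiv.Perm {v : V // v ∉ q}, Equiv.Perm.sign π •
          ∏ w : {v : V // v ∉ q}, G.genEntry w.1 (π w).1 := by
  rw [Matrix.det_apply]
  rfl

lemma det_irrel {n R : Type} [CommRing R] (i1 i2 : DecidableEq n) (f1 f2 : Fintype n)
    (M : Matrix n n R) : @Matrix.det n i1 f1 R _ M = @Matrix.det n i2 f2 R _ M := by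
  cases Subsingleton.elim i1 i2
  cases Subsingleton.elim f1 f2
  rfl

end SDAux
/-- Theorem 3.2, the determinant formula.  `det H` is a signed sum,
over the ιo-simple paths `S` of `G`, of the product `F_S` of the coupling variables
along `S` times the determinant of the generic Jacobian of the complementary
subnetwork `C_S`; moreover no coupling variable divides `det J_{C_S}`. -/
theorem stmt_4 {V : Type} [Fintype V] [DecidableEq V] (G : IONetwork V)
    (hcore : G.IsCore)
    (e : {v : V // v ≠ G.out} ≃ {v : V // v ≠ G.inp})
    (P : Finset (List V)) (hP : ∀ p, p ∈ P ↔ G.IsIOSimplePath p) :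
    (∃ ε : List V → MvPolynomial (V × V) ℚ,
      (∀ p ∈ P, ε p = 1 ∨ ε p = -1) ∧
      G.detH e = ∑ p ∈ P, ε p * pathProd p * (G.genJac {v | v ∉ p}).det) ∧
    (∀ p ∈ P, ∀ a b : V, a ≠ b →
      ¬ (MvPolynomial.X (a, b) ∣ (G.genJac {v | v ∉ p}).det)) := by
  have hQmem : ∀ p ∈ P, SDAux.IsQ G p := fun p hp =>
    ⟨((hP p).1 hp).2.2.2, ((hP p).1 hp).2.1, ((hP p).1 hp).2.2.1⟩
  constructor
  · refine ⟨SDAux.epsQ G e, fun p hp => SDAux.epsQ_one_or_neg_one e (hQmem p hp), ?_⟩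
    -- Step 1: Leibniz expansion of the homeostasis determinant.
    have step1 : G.detH e = ∑ σ : Equiv.Perm {v : V // v ≠ G.out},
        Equiv.Perm.sign σ • ∏ c : {v : V // v ≠ G.out}, G.genEntry c.1 ((e (σ c)) : V) := by
      rw [show G.detH e = Matrix.det
          (Matrix.of fun r c : {v : V // v ≠ G.out} => G.genH (e r) c)
          from SDAux.det_irrel _ _ _ _ _, Matrix.det_apply]
      rfl
    -- Step 2: reindex the sum by pairs (candidate path, complement permutation).
    have step2 : (∑ σ : Equiv.Perm {v : V // v ≠ G.out},
        Equiv.Perm.sign σ • ∏ c : {v : V // v ≠ G.out}, G.genEntry c.1 ((e (σ c)) : V))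
        = ∑ x : (q : {l : List V // l ∈ SDAux.QF G}) × Equiv.Perm {v : V // v ∉ q.1},
            Equiv.Perm.sign (SDAux.sigmaOf e x.1.1 (SDAux.mem_QF.1 x.1.2) x.2) •
              ∏ c : {v : V // v ≠ G.out}, G.genEntry c.1 (SDAux.tgt x.1.1 x.2 c.1) := by
      refine (Fintype.sum_bijective
        (fun x : (q : {l : List V // l ∈ SDAux.QF G}) × Equiv.Perm {v : V // v ∉ q.1} =>
          SDAux.sigmaOf e x.1.1 (SDAux.mem_QF.1 x.1.2) x.2) ⟨?_, ?_⟩ _ _ ?_).symm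
      · rintro ⟨⟨q, hq⟩, π⟩ ⟨⟨q', hq'⟩, π'⟩ h
        dsimp only at h
        have hqq : q = q' := by
          rw [← SDAux.qOf_sigmaOf e q (SDAux.mem_QF.1 hq) π,
            ← SDAux.qOf_sigmaOf e q' (SDAux.mem_QF.1 hq') π']
          exact congrArg (SDAux.qOf e) h
        subst hqq
        have hππ : π = π' := by
          apply Equiv.ext
          intro w
          apply Subtype.ext
          have h1 := congrArg (fun σ : Equiv.Perm {v : V // v ≠ G.out} =>
            ((e (σ ⟨w.1, fun hh => w.2 (hh ▸ (SDAux.mem_QF.1 hq).out_mem)⟩)) : V)) h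
          simp only [SDAux.e_sigmaOf] at h1
          rw [SDAux.tgt, dif_neg w.2, SDAux.tgt, dif_neg w.2] at h1
          exact h1
        rw [hππ]
      · intro σ
        exact ⟨⟨⟨SDAux.qOf e σ, SDAux.mem_QF.2 (SDAux.isQ_qOf e σ)⟩, SDAux.piOf e σ⟩,
          SDAux.sigmaOf_qOf_piOf e σ⟩
      · intro x
        congr 1
        exact (Finset.prod_congr rfl fun c _ => by rw [SDAux.e_sigmaOf]).symm
    -- Step 3: evaluate the inner sum for a fixed candidate path.
    have inner : ∀ (q : List V) (hq : SDAux.IsQ G q),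
        (∑ π : Equiv.Perm {v : V // v ∉ q},
          Equiv.Perm.sign (SDAux.sigmaOf e q hq π) • ∏ c : {v : V // v ≠ G.out},
            G.genEntry c.1 (SDAux.tgt q π c.1))
        = SDAux.epsQ G e q * SDAux.FProd G q * (G.genJac {v : V | v ∉ q}).det := by
      intro q hq
      have hterm : ∀ π : Equiv.Perm {v : V // v ∉ q},
          Equiv.Perm.sign (SDAux.sigmaOf e q hq π) • (∏ c : {v : V // v ≠ G.out},
            G.genEntry c.1 (SDAux.tgt q π c.1))
          = SDAux.epsQ G e q * (SDAux.FProd G q *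
              (Equiv.Perm.sign π • ∏ w : {v : V // v ∉ q}, G.genEntry w.1 ((π w) : V))) := by
        intro π
        rw [SDAux.prod_tgt_split q hq π, SDAux.sign_sigmaOf e q hq π, mul_smul,
          ← mul_smul_comm, Units.smul_def (Equiv.Perm.sign (SDAux.sigmaOf e q hq 1)),
          zsmul_eq_mul, ← SDAux.epsQ_eq e hq]
      rw [Finset.sum_congr rfl (fun π _ => hterm π), ← Finset.mul_sum, ← Finset.mul_sum,
        ← SDAux.detJ_eq, mul_assoc]
    -- Assemble.
    rw [step1, step2, ← Finset.univ_sigma_univ, Finset.sum_sigma]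
    have step4 : ∀ q : {l : List V // l ∈ SDAux.QF G},
        (∑ π : Equiv.Perm {v : V // v ∉ q.1},
          Equiv.Perm.sign (SDAux.sigmaOf e q.1 (SDAux.mem_QF.1 q.2) π) •
            ∏ c : {v : V // v ≠ G.out}, G.genEntry c.1 (SDAux.tgt q.1 π c.1))
        = SDAux.epsQ G e q.1 * SDAux.FProd G q.1 * (G.genJac {v : V | v ∉ q.1}).det :=
      fun q => inner q.1 (SDAux.mem_QF.1 q.2)
    rw [Finset.sum_congr rfl (fun q _ => step4 q), Finset.sum_coe_sort (SDAux.QF G)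
      (fun q => SDAux.epsQ G e q * SDAux.FProd G q * (G.genJac {v : V | v ∉ q}).det)]
    have hPsub : P ⊆ SDAux.QF G := fun p hp => SDAux.mem_QF.2 (hQmem p hp)
    rw [← Finset.sum_subset hPsub (fun q hq hnp => ?_)]
    · refine Finset.sum_congr rfl fun p hp => ?_
      rw [SDAux.FProd_eq_Flist (hQmem p hp), SDAux.Flist_eq_pathProd ((hP p).1 hp).1]
    · have hq' := SDAux.mem_QF.1 hq
      have hnc : ¬ q.Chain' G.edge := fun hc =>
        hnp ((hP q).2 ⟨hc, hq'.2.1, hq'.2.2, hq'.1⟩)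
      rw [SDAux.FProd_eq_Flist hq', SDAux.Flist_eq_zero hq' hnc, mul_zero, zero_mul]
  · intro p hp a b hab hdvd
    obtain ⟨t, ht⟩ := hdvd
    have h1 : MvPolynomial.eval (fun s : V × V => if s.1 = s.2 then (1 : ℚ) else 0)
        ((G.genJac {v : V | v ∉ p}).det) = 1 := by
      rw [RingHom.map_det]
      have hmap : (G.genJac {v : V | v ∉ p}).map
          ⇑(MvPolynomial.eval fun s : V × V => if s.1 = s.2 then (1 : ℚ) else 0)
          = (1 : Matrix ↥{v : V | v ∉ p} ↥{v : V | v ∉ p} ℚ) := by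
        ext r c
        rw [Matrix.map_apply]
        by_cases h : r = c
        · subst h
          rw [IONetwork.genJac, Matrix.of_apply, IONetwork.genEntry, if_pos (Or.inl rfl),
            MvPolynomial.eval_X, Matrix.one_apply_eq]
          simp
        · have hval : (c : V) ≠ (r : V) := fun hh => h (Subtype.ext hh.symm)
          rw [Matrix.one_apply_ne (Ne.symm (fun hh => h hh.symm)),
            IONetwork.genJac, Matrix.of_apply, IONetwork.genEntry]
          split
          · rw [MvPolynomial.eval_X]
            simp [hval]
          · simp
      rw [RingHom.mapMatrix_apply, hmap, Matrix.det_one]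
    have h2 := congrArg
      (MvPolynomial.eval fun s : V × V => if s.1 = s.2 then (1 : ℚ) else 0) ht
    rw [h1, map_mul, MvPolynomial.eval_X] at h2
    simp [hab] at h2
end

section
/- Let G₁ and G₂ be core input-output networks on the same finite node set V with the same input node ι and output node o, and suppose their arrow relations E₁, E₂ agree except possibly on backward arrows, i.e., for all nodes a, b with b ≠ ι and a ≠ o one has E₁ a b ↔ E₂ a b. Then the generic homeostasis matrices of G₁ and G₂ are equal as matrices over R = MvPolynomial (V × V) ℚ; in particular det(H₁) = det(H₂), so G₁ and G₂ are core equivalent. -/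
open Classical MvPolynomial

/-- Corollary 1.6.  If two core networks on the same node set, input
and output differ only in backward arrows (arrows into the input node or out of the
output node), then their generic homeostasis matrices are equal, and in particular their
determinants are equal, so the networks are core equivalent. -/
theorem stmt_6 {V : Type} [Fintype V] [DecidableEq V]
    (E₁ E₂ : V → V → Prop) (ι o : V) (hne : ι ≠ o)
    (hcore₁ : (IONetwork.mk E₁ ι o hne).IsCore)
    (hcore₂ : (IONetwork.mk E₂ ι o hne).IsCore)
    (hback : ∀ a b : V, b ≠ ι → a ≠ o → (E₁ a b ↔ E₂ a b)) :
    (IONetwork.mk E₁ ι o hne).genH = (IONetwork.mk E₂ ι o hne).genH ∧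
    ∀ e : {v : V // v ≠ o} ≃ {v : V // v ≠ ι},
      (IONetwork.mk E₁ ι o hne).detH e = (IONetwork.mk E₂ ι o hne).detH e := by
  have hH : (IONetwork.mk E₁ ι o hne).genH = (IONetwork.mk E₂ ι o hne).genH := by
    funext r c
    simp only [IONetwork.genH, IONetwork.genEntry, Matrix.of_apply]
    rw [hback c.1 r.1 r.2 c.2]
  refine ⟨hH, fun e => ?_⟩
  unfold IONetwork.detH
  congr 1
  funext r c
  have := congrFun (congrFun hH (e r)) c
  simpa [IONetwork.genH] using this
end

section
/- Let G be a core input-output network and let ρ be a simple node of G that is not super-simple. Then there exists a unique pair (ρ₁, ρ₂) of adjacent super-simple nodes such that every ιo-simple path of G that contains ρ visits ρ₁, then ρ, then ρ₂ in that order (with ρ strictly between ρ₁ and ρ₂). -/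
open Classical MvPolynomial

section Stmt8Helpers

variable {V : Type} [DecidableEq V]

private lemma stmt8_dup {l : List V} (h : ¬ l.Nodup) :
    ∃ (a : V) (l₁ l₂ l₃ : List V), l = l₁ ++ a :: (l₂ ++ a :: l₃) := by
  induction l with
  | nil => simp at h
  | cons x t ih =>
    by_cases hx : x ∈ t
    · obtain ⟨s, u, rfl⟩ := List.append_of_mem hx
      exact ⟨x, [], s, u, by simp⟩
    · have ht : ¬ t.Nodup := by
        intro hn; exact h (List.nodup_cons.mpr ⟨hx, hn⟩)
      obtain ⟨a, l₁, l₂, l₃, rfl⟩ := ih ht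
      exact ⟨a, x :: l₁, l₂, l₃, by simp⟩

private lemma stmt8_extract {E : V → V → Prop} :
    ∀ (n : ℕ) (l : List V), l.length ≤ n → l.Chain' E →
    ∃ p : List V, p.Chain' E ∧ p.head? = l.head? ∧ p.getLast? = l.getLast? ∧
      p.Nodup ∧ ∀ v ∈ p, v ∈ l := by
  intro n
  induction n with
  | zero =>
    intro l hl _
    have : l = [] := List.eq_nil_of_length_eq_zero (Nat.le_zero.mp hl)
    subst this
    exact ⟨[], List.isChain_nil, rfl, rfl, by simp, by simp⟩
  | succ n ih =>
    intro l hl hc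
    by_cases hnd : l.Nodup
    · exact ⟨l, hc, rfl, rfl, hnd, fun v hv => hv⟩
    · obtain ⟨a, l₁, l₂, l₃, rfl⟩ := stmt8_dup hnd
      have hc' : (l₁ ++ a :: l₃).Chain' E := by
        simp only [List.Chain'] at hc ⊢
        rw [List.isChain_append] at hc ⊢
        obtain ⟨h1, h2, h3⟩ := hc
        refine ⟨h1, ?_, ?_⟩
        · have : (a :: (l₂ ++ a :: l₃)) = (a :: l₂) ++ (a :: l₃) := by simp
          rw [this, List.isChain_append] at h2
          exact h2.2.1
        · intro x hx y hy
          apply h3 x hx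
          simpa using hy
      have hlen : (l₁ ++ a :: l₃).length ≤ n := by
        simp only [List.length_append, List.length_cons] at hl ⊢
        omega
      obtain ⟨p, hp1, hp2, hp3, hp4, hp5⟩ := ih _ hlen hc'
      refine ⟨p, hp1, ?_, ?_, hp4, ?_⟩
      · rw [hp2, List.head?_append, List.head?_append]; rfl
      · rw [hp3, List.getLast?_append, List.getLast?_append]
        congr 1
        rw [show (a :: (l₂ ++ a :: l₃)) = (a :: l₂) ++ (a :: l₃) by simp,
          List.getLast?_append]
        have : (a :: l₃).getLast?.isSome := by
          rw [List.getLast?_isSome]; simp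
        cases h : (a :: l₃).getLast? with
        | none => rw [h] at this; simp at this
        | some b => simp [Option.or]
      · intro v hv
        have := hp5 v hv
        simp only [List.mem_append, List.mem_cons] at this ⊢
        tauto

private lemma stmt8_mem_take {l : List V} {b : V} :
    ∀ {n : ℕ}, b ∈ l.take n → l.idxOf b < n := by
  induction l with
  | nil => intro n h; simp at h
  | cons a t ih =>
    intro n h
    cases n with
    | zero => simp at h
    | succ m =>
      by_cases hb : b = a
      · subst hb; simp
      · rw [List.take_succ_cons, List.mem_cons] at h
        rcases h with h | h
        · exact absurd h hb
        · rw [List.idxOf_cons_ne _ (Ne.symm hb)]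
          exact Nat.succ_lt_succ (ih h)

private lemma stmt8_mem_drop {l : List V} {b : V} (hnd : l.Nodup) :
    ∀ {n : ℕ}, b ∈ l.drop n → n ≤ l.idxOf b := by
  induction l with
  | nil => intro n h; simp at h
  | cons a t ih =>
    intro n h
    cases n with
    | zero => exact Nat.zero_le _
    | succ m =>
      rw [List.drop_succ_cons] at h
      have hbt : b ∈ t := List.mem_of_mem_drop h
      have hba : b ≠ a := by
        rintro rfl; exact (List.nodup_cons.mp hnd).1 hbt
      rw [List.idxOf_cons_ne _ (Ne.symm hba)]
      exact Nat.succ_le_succ (ih (List.nodup_cons.mp hnd).2 h)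

private lemma stmt8_splice (G : IONetwork V) {p q : List V}
    (hp : G.IsIOSimplePath p) (hq : G.IsIOSimplePath q)
    {x : V} (hxp : x ∈ p) (hxq : x ∈ q) :
    ∃ s, G.IsIOSimplePath s ∧
      ∀ v ∈ s, v ∈ p.take (p.idxOf x) ∨ v ∈ q.drop (q.idxOf x) := by
  obtain ⟨hpc, hph, hpl, hpn⟩ := hp
  obtain ⟨hqc, hqh, hql, hqn⟩ := hq
  set i := p.idxOf x with hi
  set j := q.idxOf x with hj
  have hilt : i < p.length := List.idxOf_lt_length_iff.mpr hxp
  have hjlt : j < q.length := List.idxOf_lt_length_iff.mpr hxq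
  have hpi : p[i] = x := List.getElem_idxOf hilt
  have hqj : q[j] = x := List.getElem_idxOf hjlt
  set r : List V := p.take i ++ q.drop j with hr
  have hdh : (q.drop j).head? = some x := by
    rw [List.head?_eq_getElem?, List.getElem?_drop]
    simp [List.getElem?_eq_getElem hjlt, hqj]
  have hrc : r.Chain' G.edge := by
    rw [hr, List.Chain', List.isChain_append]
    refine ⟨List.IsChain.take hpc i, List.IsChain.drop hqc j, ?_⟩
    intro y hy z hz
    rw [hdh, Option.mem_some_iff] at hz
    subst hz
    have hne : p.take i ≠ [] := by
      intro h0; rw [h0] at hy; simp at hy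
    have hipos : 0 < i := by
      rcases Nat.eq_zero_or_pos i with h0 | h0
      · exfalso; apply hne; rw [h0]; simp
      · exact h0
    have hlen : (p.take i).length = i := by
      rw [List.length_take]; omega
    have : (p.take i).getLast? = some p[i-1] := by
      rw [List.getLast?_eq_getElem?]
      simp only [hlen, List.getElem?_take, if_pos (show i - 1 < i by omega)]
      exact List.getElem?_eq_getElem (by omega)
    rw [this, Option.mem_some_iff] at hy
    subst hy
    have := List.isChain_iff_getElem.mp hpc (i-1) (by omega)
    simp only [show i - 1 + 1 = i by omega] at this
    rw [hpi] at this
    exact this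
  have hrh : r.head? = some G.inp := by
    rw [hr, List.head?_append]
    rcases Nat.eq_zero_or_pos i with h0 | h0
    · have ht : p.take i = [] := by rw [h0]; simp
      have hx0 : x = G.inp := by
        have h1 : p[0]? = some G.inp := by rw [← List.head?_eq_getElem?]; exact hph
        rw [List.getElem?_eq_getElem (show 0 < p.length by omega)] at h1
        have h2 : p[0]'(by omega) = x := by
          have h3 := hpi
          simp only [h0] at h3
          exact h3
        rw [h2] at h1
        exact Option.some_inj.mp h1
      rw [ht, hdh, hx0]
      rfl
    · have ht : (p.take i).head? = some G.inp := by
        rw [List.head?_eq_getElem?, List.getElem?_take, if_pos h0, ← List.head?_eq_getElem?]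
        exact hph
      rw [ht]
      rfl
  have hrl : r.getLast? = some G.out := by
    rw [hr, List.getLast?_append]
    have ht : (q.drop j).getLast? = some G.out := by
      rw [List.getLast?_eq_getElem?, List.length_drop, List.getElem?_drop]
      have : j + (q.length - j - 1) = q.length - 1 := by omega
      rw [this, ← List.getLast?_eq_getElem?]
      exact hql
    rw [ht]
    rfl
  obtain ⟨s, hs1, hs2, hs3, hs4, hs5⟩ := stmt8_extract r.length r le_rfl hrc
  refine ⟨s, ⟨hs1, by rw [hs2]; exact hrh, by rw [hs3]; exact hrl, hs4⟩, ?_⟩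
  intro v hv
  have := hs5 v hv
  rw [hr, List.mem_append] at this
  exact this

/-- The master path-surgery lemma: a super-simple node `b` cannot come after `x`
on one ιo-simple path but before `x` on another. -/
private lemma stmt8_master (G : IONetwork V) {p q : List V} {x b : V}
    (hb : G.SuperSimple b) (hp : G.IsIOSimplePath p) (hq : G.IsIOSimplePath q)
    (h1 : Before p x b) (h2 : Before q b x) : False := by
  obtain ⟨hxp, hbp, hlt1⟩ := h1
  obtain ⟨hbq, hxq, hlt2⟩ := h2
  obtain ⟨s, hsp, hmem⟩ := stmt8_splice G hp hq hxp hxq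
  rcases hmem b (hb s hsp) with h | h
  · exact absurd (stmt8_mem_take h) (by omega)
  · exact absurd (stmt8_mem_drop hq.2.2.2 h) (by omega)

private lemma stmt8_ss_inp (G : IONetwork V) : G.SuperSimple G.inp := by
  intro p hp
  cases p with
  | nil => simp [IONetwork.IsIOSimplePath] at hp
  | cons a t =>
    have := hp.2.1
    simp only [List.head?_cons, Option.some_inj] at this
    simp [← this]

private lemma stmt8_ss_out (G : IONetwork V) : G.SuperSimple G.out := by
  intro p hp
  have h := hp.2.2.1
  rw [List.getLast?_eq_getElem?] at h
  rcases List.getElem?_eq_some_iff.mp h with ⟨hlt, heq⟩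
  rw [← heq]
  exact List.getElem_mem _

private lemma stmt8_indexOf_inp (G : IONetwork V) {p : List V}
    (hp : G.IsIOSimplePath p) : p.idxOf G.inp = 0 := by
  cases p with
  | nil => simp [IONetwork.IsIOSimplePath] at hp
  | cons a t =>
    have := hp.2.1
    simp only [List.head?_cons, Option.some_inj] at this
    rw [← this, List.idxOf_cons_self]

private lemma stmt8_indexOf_out (G : IONetwork V) {p : List V}
    (hp : G.IsIOSimplePath p) : p.idxOf G.out = p.length - 1 := by
  have hm : G.out ∈ p := stmt8_ss_out G p hp
  have hlt : p.idxOf G.out < p.length := List.idxOf_lt_length_iff.mpr hm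
  have h1 : p[p.idxOf G.out] = G.out := List.getElem_idxOf hlt
  have h := hp.2.2.1
  rw [List.getLast?_eq_getElem?] at h
  rcases List.getElem?_eq_some_iff.mp h with ⟨hlt2, heq⟩
  have : p[p.idxOf G.out] = p[p.length - 1] := by rw [h1, heq]
  exact (hp.2.2.2.getElem_inj_iff).mp this

end Stmt8Helpers

/-- Lemma 6.2.  Every simple node that is not super-simple lies
uniquely between a pair of adjacent super-simple nodes: there is a unique pair
`(ρ₁, ρ₂)` of adjacent super-simple nodes such that every ιo-simple path containing `ρ`
visits `ρ₁`, then `ρ`, then `ρ₂` in that order. -/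
theorem stmt_8 {V : Type} [Fintype V] [DecidableEq V] (G : IONetwork V)
    (hcore : G.IsCore) (ρ : V)
    (hs : G.SimpleNode ρ) (hns : ¬ G.SuperSimple ρ) :
    ∃! q : V × V, G.SSAdjacent q.1 q.2 ∧
      ∀ p : List V, G.IsIOSimplePath p → ρ ∈ p →
        Before p q.1 ρ ∧ Before p ρ q.2 := by
  classical
  obtain ⟨p₀, hp₀, hρ⟩ := hs
  set i := p₀.idxOf ρ with hidef
  have hnd₀ := hp₀.2.2.2
  have hinp_mem : G.inp ∈ p₀ := stmt8_ss_inp G p₀ hp₀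
  have hout_mem : G.out ∈ p₀ := stmt8_ss_out G p₀ hp₀
  have hρ_ne_inp : ρ ≠ G.inp := fun h => hns (h ▸ stmt8_ss_inp G)
  have hρ_ne_out : ρ ≠ G.out := fun h => hns (h ▸ stmt8_ss_out G)
  have hilt : i < p₀.length := List.idxOf_lt_length_iff.mpr hρ
  have hi_pos : 0 < i := by
    rcases Nat.eq_zero_or_pos i with h0 | h0
    · exfalso
      apply hρ_ne_inp
      apply (List.idxOf_inj hρ).mp
      rw [stmt8_indexOf_inp G hp₀, ← hidef, h0]
    · exact h0
  have hi_lt_out : i < p₀.idxOf G.out := by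
    have hne : i ≠ p₀.idxOf G.out := fun h =>
      hρ_ne_out ((List.idxOf_inj hρ).mp h)
    rw [stmt8_indexOf_out G hp₀] at hne ⊢
    omega
  -- the candidate sets
  set A : Finset V := Finset.univ.filter (fun v => G.SuperSimple v ∧ p₀.idxOf v < i)
    with hA
  set B : Finset V := Finset.univ.filter (fun v => G.SuperSimple v ∧ i < p₀.idxOf v)
    with hB
  have hAne : A.Nonempty := by
    refine ⟨G.inp, ?_⟩
    rw [hA, Finset.mem_filter]
    exact ⟨Finset.mem_univ _, stmt8_ss_inp G, by rw [stmt8_indexOf_inp G hp₀]; exact hi_pos⟩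
  have hBne : B.Nonempty := by
    refine ⟨G.out, ?_⟩
    rw [hB, Finset.mem_filter]
    exact ⟨Finset.mem_univ _, stmt8_ss_out G, hi_lt_out⟩
  obtain ⟨ρ₁, hρ₁A, hρ₁max⟩ := A.exists_max_image (fun v => p₀.idxOf v) hAne
  obtain ⟨ρ₂, hρ₂B, hρ₂min⟩ := B.exists_min_image (fun v => p₀.idxOf v) hBne
  rw [hA, Finset.mem_filter] at hρ₁A
  rw [hB, Finset.mem_filter] at hρ₂B
  obtain ⟨-, hss₁, hidx₁⟩ := hρ₁A
  obtain ⟨-, hss₂, hidx₂⟩ := hρ₂B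
  have hρ₁mem : ρ₁ ∈ p₀ := hss₁ p₀ hp₀
  have hρ₂mem : ρ₂ ∈ p₀ := hss₂ p₀ hp₀
  have hρ₁maxA : ∀ c, G.SuperSimple c → p₀.idxOf c < i → p₀.idxOf c ≤ p₀.idxOf ρ₁ := by
    intro c hc hci
    exact hρ₁max c (by rw [hA, Finset.mem_filter]; exact ⟨Finset.mem_univ _, hc, hci⟩)
  have hρ₂minB : ∀ c, G.SuperSimple c → i < p₀.idxOf c → p₀.idxOf ρ₂ ≤ p₀.idxOf c := by
    intro c hc hci
    exact hρ₂min c (by rw [hB, Finset.mem_filter]; exact ⟨Finset.mem_univ _, hc, hci⟩)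
  -- key claims
  have K1 : ∀ p, G.IsIOSimplePath p → ρ ∈ p → Before p ρ₁ ρ := by
    intro p hp hρp
    have h1m : ρ₁ ∈ p := hss₁ p hp
    have hne : ρ₁ ≠ ρ := fun h => hns (h ▸ hss₁)
    by_contra hcon
    have : p.idxOf ρ < p.idxOf ρ₁ := by
      rcases Nat.lt_trichotomy (p.idxOf ρ₁) (p.idxOf ρ) with h | h | h
      · exact absurd ⟨h1m, hρp, h⟩ hcon
      · exact absurd ((List.idxOf_inj h1m).mp h) hne
      · exact h
    exact stmt8_master G hss₁ hp hp₀ ⟨hρp, h1m, this⟩ ⟨hρ₁mem, hρ, hidx₁⟩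
  have K2 : ∀ p, G.IsIOSimplePath p → ρ ∈ p → Before p ρ ρ₂ := by
    intro p hp hρp
    have h2m : ρ₂ ∈ p := hss₂ p hp
    have hne : ρ ≠ ρ₂ := fun h => hns (h ▸ hss₂)
    by_contra hcon
    have : p.idxOf ρ₂ < p.idxOf ρ := by
      rcases Nat.lt_trichotomy (p.idxOf ρ) (p.idxOf ρ₂) with h | h | h
      · exact absurd ⟨hρp, h2m, h⟩ hcon
      · exact absurd ((List.idxOf_inj hρp).mp h) hne
      · exact h
    exact stmt8_master G hss₂ hp₀ hp ⟨hρ, hρ₂mem, hidx₂⟩ ⟨h2m, hρp, this⟩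
  -- adjacency
  have hne12 : ρ₁ ≠ ρ₂ := by
    intro h
    rw [h] at hidx₁
    omega
  have hbefore12 : ∀ p, G.IsIOSimplePath p → Before p ρ₁ ρ₂ := by
    intro p hp
    have h1m : ρ₁ ∈ p := hss₁ p hp
    have h2m : ρ₂ ∈ p := hss₂ p hp
    by_contra hcon
    have : p.idxOf ρ₂ < p.idxOf ρ₁ := by
      rcases Nat.lt_trichotomy (p.idxOf ρ₁) (p.idxOf ρ₂) with h | h | h
      · exact absurd ⟨h1m, h2m, h⟩ hcon
      · exact absurd ((List.idxOf_inj h1m).mp h) hne12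
      · exact h
    exact stmt8_master G hss₂ hp₀ hp ⟨hρ₁mem, hρ₂mem, by omega⟩ ⟨h2m, h1m, this⟩
  have hnobetween : ∀ c, G.SuperSimple c → ∀ p, G.IsIOSimplePath p →
      ¬ (Before p ρ₁ c ∧ Before p c ρ₂) := by
    rintro c hc p hp ⟨⟨h1m, hcm, hlt1⟩, ⟨-, h2m, hlt2⟩⟩
    have hcmem₀ : c ∈ p₀ := hc p₀ hp₀
    -- transfer the betweenness to p₀
    have hb1 : p₀.idxOf ρ₁ < p₀.idxOf c := by
      have hnec : ρ₁ ≠ c := fun h => by rw [h] at hlt1; omega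
      rcases Nat.lt_trichotomy (p₀.idxOf ρ₁) (p₀.idxOf c) with h | h | h
      · exact h
      · exact absurd ((List.idxOf_inj hρ₁mem).mp h) hnec
      · exact absurd (stmt8_master G hc hp hp₀ ⟨h1m, hcm, hlt1⟩ ⟨hcmem₀, hρ₁mem, h⟩) not_false
    have hb2 : p₀.idxOf c < p₀.idxOf ρ₂ := by
      have hnec : c ≠ ρ₂ := fun h => by rw [h] at hlt2; omega
      rcases Nat.lt_trichotomy (p₀.idxOf c) (p₀.idxOf ρ₂) with h | h | h
      · exact h
      · exact absurd ((List.idxOf_inj hcmem₀).mp h) hnec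
      · exact absurd (stmt8_master G hss₂ hp hp₀ ⟨hcm, h2m, hlt2⟩ ⟨hρ₂mem, hcmem₀, h⟩)
          not_false
    have hcρ : c ≠ ρ := fun h => hns (h ▸ hc)
    have hcii : p₀.idxOf c ≠ i := fun h =>
      hcρ ((List.idxOf_inj hcmem₀).mp h)
    rcases Nat.lt_or_ge (p₀.idxOf c) i with h | h
    · have := hρ₁maxA c hc h
      omega
    · have := hρ₂minB c hc (by omega)
      omega
  refine ⟨(ρ₁, ρ₂), ⟨⟨hss₁, hss₂, hne12, hbefore12, hnobetween⟩,
    fun p hp hρp => ⟨K1 p hp hρp, K2 p hp hρp⟩⟩, ?_⟩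
  -- uniqueness
  rintro ⟨a, b⟩ ⟨⟨hsa, hsb, hab, hbab, hnb⟩, hKab⟩
  obtain ⟨⟨ham, -, hlta'⟩, ⟨-, hbm, hltb'⟩⟩ := hKab p₀ hp₀ hρ
  have hlta : p₀.idxOf a < p₀.idxOf ρ := hlta'
  have hltb : p₀.idxOf ρ < p₀.idxOf b := hltb'
  have hamem : a ∈ p₀ := ham
  have hbmem : b ∈ p₀ := hsb p₀ hp₀
  have ha : a = ρ₁ := by
    by_contra hne
    have hidne : p₀.idxOf a ≠ p₀.idxOf ρ₁ := fun h =>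
      hne ((List.idxOf_inj hamem).mp h)
    rcases Nat.lt_or_ge (p₀.idxOf a) (p₀.idxOf ρ₁) with h | h
    · exact hnb ρ₁ hss₁ p₀ hp₀ ⟨⟨hamem, hρ₁mem, h⟩, ⟨hρ₁mem, hbmem, show p₀.idxOf ρ₁ < p₀.idxOf b by omega⟩⟩
    · exact hnobetween a hsa p₀ hp₀
        ⟨⟨hρ₁mem, hamem, show p₀.idxOf ρ₁ < p₀.idxOf a by omega⟩, ⟨hamem, hρ₂mem, show p₀.idxOf a < p₀.idxOf ρ₂ by omega⟩⟩
  have hb : b = ρ₂ := by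
    by_contra hne
    have hidne : p₀.idxOf b ≠ p₀.idxOf ρ₂ := fun h =>
      hne ((List.idxOf_inj hbmem).mp h)
    rcases Nat.lt_or_ge (p₀.idxOf ρ₂) (p₀.idxOf b) with h | h
    · exact hnb ρ₂ hss₂ p₀ hp₀ ⟨⟨hamem, hρ₂mem, show p₀.idxOf a < p₀.idxOf ρ₂ by omega⟩, ⟨hρ₂mem, hbmem, h⟩⟩
    · exact hnobetween b hsb p₀ hp₀
        ⟨⟨hρ₁mem, hbmem, show p₀.idxOf ρ₁ < p₀.idxOf b by omega⟩, ⟨hbmem, hρ₂mem, show p₀.idxOf b < p₀.idxOf ρ₂ by omega⟩⟩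
  rw [ha, hb]
end

section
/- Let G be a core input-output network and let (ρ₁, ρ₂) and (ρ₃, ρ₄) be pairs of adjacent super-simple nodes with ρ₃ downstream from ρ₂ in the super-simple order. (a) If ρ₃ ≠ ρ₂ and there is an arrow in G from a node ρ of L(ρ₁,ρ₂) to a node τ of L(ρ₃,ρ₄), then ρ = ρ₂, τ = ρ₃, and ρ₂ and ρ₃ are adjacent super-simple nodes. (b) If ρ₃ = ρ₂ (the two pairs share the node ρ₂) and there is an arrow in G from a node ρ of L(ρ₁,ρ₂) to a node τ of L(ρ₂,ρ₄), then ρ = ρ₂ or τ = ρ₂. -/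
open Classical MvPolynomial

section Aux
variable {V : Type}

private lemma head?_mem {l : List V} {a : V} (h : l.head? = some a) : a ∈ l := by
  cases l with
  | nil => simp at h
  | cons x t => simp at h; simp [h]

private lemma mem_take_indexOf [DecidableEq V] :
    ∀ {l : List V} {n : ℕ} {v : V}, v ∈ l.take n → l.idxOf v < n := by
  intro l
  induction l with
  | nil => intro n v h; simp at h
  | cons a t ih =>
    intro n v h
    cases n with
    | zero => simp at h
    | succ m =>
      rw [List.take_succ_cons] at h
      rcases List.mem_cons.mp h with rfl | h
      · simp
      · by_cases hav : a = v
        · subst hav; simp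
        · rw [List.idxOf_cons_ne _ (by simpa using hav)]
          exact Nat.succ_lt_succ (ih h)

private lemma mem_drop_indexOf [DecidableEq V] {l : List V} (hn : l.Nodup)
    {n : ℕ} {v : V} (h : v ∈ l.drop n) : n ≤ l.idxOf v := by
  obtain ⟨i, hi, hget⟩ := List.mem_iff_getElem.mp h
  have hlen : n + i < l.length := by
    have : (l.drop n).length = l.length - n := List.length_drop
    omega
  have hg : l[n+i]'hlen = v := by
    rw [← List.getElem_drop]; exact hget
  have hvl : v ∈ l := List.mem_of_mem_drop h
  have hidx : l.idxOf v < l.length := List.idxOf_lt_length_iff.mpr hvl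
  have hg2 : l[l.idxOf v]'hidx = v := List.getElem_idxOf hidx
  have : n + i = l.idxOf v := by
    have heq : l[n+i]'hlen = l[l.idxOf v]'hidx := by rw [hg, hg2]
    exact (hn.getElem_inj_iff).mp heq
  omega

private lemma head?_take {l : List V} {n : ℕ} : (l.take (n+1)).head? = l.head? := by
  cases l <;> simp

private lemma getLast?_take [DecidableEq V] {l : List V} {a : V} (h : a ∈ l) :
    (l.take (l.idxOf a + 1)).getLast? = some a := by
  rw [List.take_succ, List.getElem?_idxOf h]
  simp

private lemma head?_drop_indexOf [DecidableEq V] {l : List V} {a : V} (h : a ∈ l) :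
    (l.drop (l.idxOf a)).head? = some a := by
  rw [List.head?_drop]; exact List.getElem?_idxOf h

private lemma getLast?_drop_indexOf [DecidableEq V] {l : List V} {a : V} (h : a ∈ l) :
    (l.drop (l.idxOf a)).getLast? = l.getLast? := by
  have hlt : l.idxOf a < l.length := List.idxOf_lt_length_iff.mpr h
  conv_rhs => rw [← List.take_append_drop (l.idxOf a) l]
  have hne : l.drop (l.idxOf a) ≠ [] := by
    intro hcon
    have := List.drop_eq_nil_iff.mp hcon
    omega
  exact (List.getLast?_append_of_ne_nil _ hne).symm

private lemma chain'_rtg (r : V → V → Prop) :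
    ∀ (l : List V) (a b : V), l.Chain' r → l.head? = some a → l.getLast? = some b →
      Relation.ReflTransGen r a b := by
  intro l
  induction l with
  | nil => intro a b _ h; simp at h
  | cons x t ih =>
    intro a b hc hh hl
    simp at hh; subst hh
    cases t with
    | nil => simp at hl; subst hl; exact Relation.ReflTransGen.refl
    | cons y u =>
      simp only [List.Chain', List.isChain_cons_cons] at hc
      have hl' : (y :: u).getLast? = some b := by
        rw [← hl]; simp [List.getLast?_cons_cons]
      exact Relation.ReflTransGen.head hc.1 (ih y b hc.2 rfl hl')

private lemma rtg_nodup_path [DecidableEq V] (r : V → V → Prop) {a b : V}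
    (h : Relation.ReflTransGen r a b) :
    ∃ p : List V, p.Chain' r ∧ p.head? = some a ∧ p.getLast? = some b ∧ p.Nodup := by
  induction h with
  | refl => exact ⟨[a], List.isChain_singleton a, rfl, rfl, List.nodup_singleton a⟩
  | @tail m c hab hbc ih =>
    obtain ⟨p, hc, hh, hl, hn⟩ := ih
    by_cases hcp : c ∈ p
    · refine ⟨p.take (p.idxOf c + 1), hc.take _, ?_, getLast?_take hcp,
        hn.sublist (List.take_sublist _ _)⟩
      rw [head?_take, hh]
    · refine ⟨p ++ [c], ?_, ?_, by simp, ?_⟩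
      · refine hc.append (List.isChain_singleton c) ?_
        intro x hx y hy
        simp at hy; subst hy
        rw [hl] at hx; simp at hx; subst hx
        exact hbc
      · cases p with
        | nil => simp at hh
        | cons z t => simp at hh ⊢; exact hh
      · simp [List.nodup_append, hn, hcp]; intro x hx hxc; subst hxc; exact hcp hx

private lemma chain'_restrict {E : V → V → Prop} {P : V → Prop} :
    ∀ {l : List V}, l.Chain' E → (∀ v ∈ l, P v) → l.Chain' (fun x y => E x y ∧ P y) := by
  intro l
  induction l with
  | nil => intro _ _; exact List.isChain_nil
  | cons a t ih =>
    intro h hP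
    cases t with
    | nil => exact List.isChain_singleton _
    | cons b u =>
      simp only [List.Chain', List.isChain_cons_cons] at h ⊢
      exact ⟨⟨h.1, hP b (by simp)⟩, ih h.2 (fun v hv => hP v (List.mem_cons_of_mem _ hv))⟩

private lemma chain'_prop {E : V → V → Prop} {P : V → Prop} :
    ∀ {l : List V} {a : V}, l.Chain' (fun x y => E x y ∧ P y) → l.head? = some a → P a →
      ∀ v ∈ l, P v := by
  intro l
  induction l with
  | nil => intro a _ _ _ v hv; simp at hv
  | cons x t ih =>
    intro a hc hh ha v hv
    simp at hh; subst hh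
    cases t with
    | nil => simp at hv; subst hv; exact ha
    | cons y u =>
      simp only [List.Chain', List.isChain_cons_cons] at hc
      rcases List.mem_cons.mp hv with rfl | hv
      · exact ha
      · exact ih hc.2 rfl hc.1.2 v hv

private lemma glue [DecidableEq V] (G : IONetwork V) {l1 l2 : List V} {x y : V}
    (P : V → Prop)
    (c1 : l1.Chain' G.edge) (c2 : l2.Chain' G.edge)
    (h1 : l1.head? = some G.inp) (g1 : l1.getLast? = some x)
    (h2 : l2.head? = some y) (g2 : l2.getLast? = some G.out)
    (e : G.edge x y) (p1 : ∀ v ∈ l1, P v) (p2 : ∀ v ∈ l2, P v) :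
    ∃ p, G.IsIOSimplePath p ∧ ∀ v ∈ p, P v := by
  set r : V → V → Prop := fun a b => G.edge a b ∧ P b with hr
  have rt1 : Relation.ReflTransGen r G.inp x :=
    chain'_rtg r l1 _ _ (chain'_restrict c1 p1) h1 g1
  have rt2 : Relation.ReflTransGen r y G.out :=
    chain'_rtg r l2 _ _ (chain'_restrict c2 p2) h2 g2
  have rxy : r x y := ⟨e, p2 y (head?_mem h2)⟩
  have rt : Relation.ReflTransGen r G.inp G.out :=
    rt1.trans ((Relation.ReflTransGen.single rxy).trans rt2)
  obtain ⟨p, hc, hh, hl, hn⟩ := rtg_nodup_path r rt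
  refine ⟨p, ⟨hc.imp (fun _ _ h => h.1), hh, hl, hn⟩, ?_⟩
  exact chain'_prop hc hh (p1 _ (head?_mem h1)) 

private lemma avoid_contra [DecidableEq V] (G : IONetwork V) {c : V}
    (hss : G.SuperSimple c)
    {p q : List V} {x y : V} (hp : G.IsIOSimplePath p) (hq : G.IsIOSimplePath q)
    (hx : x ∈ p) (hy : y ∈ q) (hcp : c ∈ p) (hcq : c ∈ q)
    (hxc : p.idxOf x < p.idxOf c) (hcy : q.idxOf c < q.idxOf y)
    (e : G.edge x y) : False := by
  obtain ⟨pc, ph, pl, pn⟩ := hp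
  obtain ⟨qc, qh, ql, qn⟩ := hq
  have key := glue G (fun v => v ≠ c) (pc.take (p.idxOf x + 1)) (qc.drop (q.idxOf y))
    (by rw [head?_take, ph]) (getLast?_take hx)
    (head?_drop_indexOf hy) (by rw [getLast?_drop_indexOf hy, ql])
    e
    (by
      intro v hv hvc
      subst hvc
      have := mem_take_indexOf hv
      omega)
    (by
      intro v hv hvc
      subst hvc
      have := mem_drop_indexOf qn hv
      omega)
  obtain ⟨p', hp', hall⟩ := key
  exact hall c (hss p' hp') rfl

/-- Lemma 6.3 (a),(b).  Let `(ρ₁,ρ₂)` and `(ρ₃,ρ₄)` be pairs of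
adjacent super-simple nodes with `ρ₃` downstream from `ρ₂` in the super-simple order.
(a) If `ρ₃ ≠ ρ₂` and there is an arrow from `ρ ∈ L(ρ₁,ρ₂)` to `τ ∈ L(ρ₃,ρ₄)`, then
`ρ = ρ₂`, `τ = ρ₃`, and `ρ₂`, `ρ₃` are adjacent super-simple nodes.
(b) If `ρ₃ = ρ₂` and there is an arrow from `ρ ∈ L(ρ₁,ρ₂)` to `τ ∈ L(ρ₂,ρ₄)`, then
`ρ = ρ₂` or `τ = ρ₂`. -/
theorem stmt_9 {V : Type} [Fintype V] [DecidableEq V] (G : IONetwork V)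
    (hcore : G.IsCore) (ρ₁ ρ₂ ρ₃ ρ₄ : V)
    (h12 : G.SSAdjacent ρ₁ ρ₂) (h34 : G.SSAdjacent ρ₃ ρ₄)
    (hdown : ∀ p : List V, G.IsIOSimplePath p → (ρ₃ = ρ₂ ∨ Before p ρ₂ ρ₃)) :
    (∀ ρ τ : V, ρ₃ ≠ ρ₂ → G.InL ρ₁ ρ₂ ρ → G.InL ρ₃ ρ₄ τ → G.edge ρ τ →
        ρ = ρ₂ ∧ τ = ρ₃ ∧ G.SSAdjacent ρ₂ ρ₃) ∧
    (∀ ρ τ : V, ρ₃ = ρ₂ → G.InL ρ₁ ρ₂ ρ → G.InL ρ₂ ρ₄ τ → G.edge ρ τ →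
        ρ = ρ₂ ∨ τ = ρ₂) := by

  obtain ⟨ss1, ss2, hne12, hbef12, hno12⟩ := h12
  obtain ⟨ss3, ss4, hne34, hbef34, hno34⟩ := h34
  obtain ⟨p0, hp0⟩ : ∃ p, G.IsIOSimplePath p := by
    obtain ⟨p, hc, hh, hl, hn⟩ := rtg_nodup_path G.edge (hcore G.out).1
    exact ⟨p, hc, hh, hl, hn⟩
  have key : ∀ ρ τ : V, G.InL ρ₁ ρ₂ ρ → G.edge ρ τ →
      ∀ q, G.IsIOSimplePath q → τ ∈ q → q.idxOf ρ₂ < q.idxOf τ → ρ = ρ₂ := by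
    intro ρ τ hρ e q hq hτq hlt
    rcases hρ with rfl | rfl | ⟨p, hp, ⟨h1p, hρp, _⟩, ⟨_, h2p, hlt2⟩⟩
    · obtain ⟨h1q, h2q, h12q⟩ := hbef12 q hq
      exact (avoid_contra G ss2 hq hq h1q hτq h2q (ss2 q hq) h12q hlt e).elim
    · rfl
    · exact (avoid_contra G ss2 hp hq hρp hτq h2p (ss2 q hq) hlt2 hlt e).elim
  constructor
  · intro ρ τ hne hρ hτ e
    obtain ⟨q, hq, hτq, hlt⟩ :
        ∃ q, G.IsIOSimplePath q ∧ τ ∈ q ∧ q.idxOf ρ₂ < q.idxOf τ := by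
      rcases hτ with rfl | rfl | ⟨q, hq, ⟨h3q, hτq, hlt1⟩, _⟩
      · obtain ⟨h2, h3, h23⟩ := (hdown p0 hp0).resolve_left hne
        exact ⟨p0, hp0, h3, h23⟩
      · obtain ⟨h2, h3, h23⟩ := (hdown p0 hp0).resolve_left hne
        obtain ⟨h3', h4, h34q⟩ := hbef34 p0 hp0
        exact ⟨p0, hp0, h4, by omega⟩
      · obtain ⟨h2, h3', h23⟩ := (hdown q hq).resolve_left hne
        exact ⟨q, hq, hτq, by omega⟩
    have hρ2 : ρ = ρ₂ := key ρ τ hρ e q hq hτq hlt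
    subst hρ2
    have hτ3 : τ = ρ₃ := by
      rcases hτ with rfl | rfl | ⟨q', hq', ⟨h3q', hτq', hlt1'⟩, _⟩
      · rfl
      · obtain ⟨h2, h3, h23⟩ := (hdown p0 hp0).resolve_left hne
        obtain ⟨h3', h4, h34q⟩ := hbef34 p0 hp0
        exact (avoid_contra G ss3 hp0 hp0 h2 h4 h3 h3 h23 h34q e).elim
      · obtain ⟨h2, h3'', h23⟩ := (hdown q' hq').resolve_left hne
        exact (avoid_contra G ss3 hq' hq' h2 hτq' h3'' h3'' h23 hlt1' e).elim
    subst hτ3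
    refine ⟨rfl, rfl, ss2, ss3, Ne.symm hne,
      fun p hp => (hdown p hp).resolve_left hne, ?_⟩
    intro c hc p hp hcon
    obtain ⟨⟨h2p, hcp, i2c⟩, ⟨_, h3p, ic3⟩⟩ := hcon
    exact avoid_contra G hc hp hp h2p h3p hcp hcp i2c ic3 e
  · intro ρ τ heq hρ hτ e
    subst heq
    by_cases hτ2 : τ = ρ₃
    · exact Or.inr hτ2
    left
    rcases hτ with rfl | heq4 | ⟨q, hq, ⟨h2q, hτq, hlt1⟩, _⟩
    · exact absurd rfl hτ2
    · obtain ⟨h2, h4, h24⟩ := hbef34 p0 hp0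
      rw [← heq4] at h4 h24
      exact key ρ τ hρ e p0 hp0 h4 h24
    · exact key ρ τ hρ e q hq hτq hlt1
end Aux
end

section
/- Let G be a core input-output network, let B be an appendage path component of G that violates the no-cycle condition, let S be an ιo-simple path with complementary subnetwork C_S, and let γ be a cycle in G, lying in C_S, that contains both a node of B and a node of C_S ∖ B. Then γ contains no super-simple node, every simple node of γ fails to be super-simple, and all simple nodes of γ belong to the super-simple subnetwork L(ρ₁,ρ₂) of a single pair (ρ₁,ρ₂) of adjacent super-simple nodes. -/
open Classical MvPolynomial

section Stmt11Helpers

variable {V : Type} [DecidableEq V]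

lemma rr_mono {E : V → V → Prop} {W W' : Set V} (h : W ⊆ W') {a b : V}
    (hr : RestrictedReach E W a b) : RestrictedReach E W' a b :=
  Relation.ReflTransGen.mono (r := fun x y => E x y ∧ x ∈ W ∧ y ∈ W)
    (p := fun x y => E x y ∧ x ∈ W' ∧ y ∈ W') (fun _ _ ⟨he, hx, hy⟩ => ⟨he, h hx, h hy⟩) _ _ hr

lemma mem_of_head? {p : List V} {a : V} (h : p.head? = some a) : a ∈ p := by
  cases p with
  | nil => simp at h
  | cons x t => simp at h; simp [h]

lemma mem_of_getLast? {p : List V} {a : V} (h : p.getLast? = some a) : a ∈ p := by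
  rw [List.getLast?_eq_getElem?] at h
  rcases List.getElem?_eq_some_iff.1 h with ⟨hl, he⟩
  exact he ▸ List.getElem_mem _

lemma indexOf_head {p : List V} {a : V} (h : p.head? = some a) : p.idxOf a = 0 := by
  cases p with
  | nil => simp at h
  | cons x t => simp at h; subst h; exact List.idxOf_cons_self

lemma eq_of_indexOf_eq {p : List V} {x y : V} (hx : x ∈ p) (hy : y ∈ p)
    (h : p.idxOf x = p.idxOf y) : x = y := by
  have hx' : p.idxOf x < p.length := List.idxOf_lt_length_iff.2 hx
  have hy' : p.idxOf y < p.length := List.idxOf_lt_length_iff.2 hy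
  have e1 : p[p.idxOf x] = x := List.getElem_idxOf hx'
  have e2 : p[p.idxOf y] = y := List.getElem_idxOf hy'
  have e3 : p[p.idxOf x]'hx' = p[p.idxOf y]'hy' := by congr 1
  rw [← e1, e3, e2]

lemma not_mem_take {p : List V} (hnd : p.Nodup) {c u : V} (hc : c ∈ p)
    (h : p.idxOf u < p.idxOf c) : c ∉ p.take (p.idxOf u + 1) := by
  intro hmem
  have hc' : p.idxOf c < p.length := List.idxOf_lt_length_iff.2 hc
  have hle : p.idxOf u + 1 ≤ p.idxOf c := h
  have hdrop : c ∈ p.drop (p.idxOf u + 1) := by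
    have hj : p.idxOf c - (p.idxOf u + 1) < (p.drop (p.idxOf u + 1)).length := by
      simp [List.length_drop]; omega
    have : (p.drop (p.idxOf u + 1))[p.idxOf c - (p.idxOf u + 1)]'hj = c := by
      rw [List.getElem_drop]
      have : p.idxOf u + 1 + (p.idxOf c - (p.idxOf u + 1)) = p.idxOf c := by omega
      simp_rw [this]
      exact List.getElem_idxOf hc'
    exact this ▸ List.getElem_mem _
  exact List.disjoint_take_drop hnd (le_refl _) hmem hdrop

lemma not_mem_drop {p : List V} (hnd : p.Nodup) {c v : V} (hc : c ∈ p)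
    (h : p.idxOf c < p.idxOf v) : c ∉ p.drop (p.idxOf v) := by
  intro hmem
  have hc' : p.idxOf c < p.length := List.idxOf_lt_length_iff.2 hc
  have htake : c ∈ p.take (p.idxOf v) := by
    have hj : p.idxOf c < (p.take (p.idxOf v)).length := by
      simp [List.length_take]; omega
    have : (p.take (p.idxOf v))[p.idxOf c]'hj = c := by
      rw [List.getElem_take]; exact List.getElem_idxOf hc'
    exact this ▸ List.getElem_mem _
  exact List.disjoint_take_drop hnd (le_refl _) htake hmem

/-- A chain gives restricted reachability from its head to its last node. -/
lemma chain_reach {E : V → V → Prop} :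
    ∀ (p : List V), p.Chain' E → ∀ {a b : V}, p.head? = some a → p.getLast? = some b →
      RestrictedReach E {x | x ∈ p} a b
  | [], _, a, b => by intro h; simp at h
  | [x], _, a, b => by
      intro ha hb
      simp at ha hb
      subst ha; subst hb
      exact Relation.ReflTransGen.refl
  | x :: y :: t, hch, a, b => by
      intro ha hb
      simp at ha; subst ha
      have h1 : E x y := (List.isChain_cons_cons.1 hch).1
      have h2 : List.Chain' E (y :: t) := (List.isChain_cons_cons.1 hch).2
      have hb' : (y :: t).getLast? = some b := by
        rwa [List.getLast?_cons_cons] at hb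
      have ih := chain_reach (y :: t) h2 (show (y :: t).head? = some y from rfl) hb'
      have ih' : RestrictedReach E {z | z ∈ x :: y :: t} y b :=
        rr_mono (fun z hz => by simp at hz ⊢; tauto) ih
      exact Relation.ReflTransGen.head ⟨h1, by simp, by simp⟩ ih'

/-- Restricted reachability gives a nodup chain inside `W`. -/
lemma walk_to_path {E : V → V → Prop} {W : Set V} {a b : V} (ha : a ∈ W)
    (h : RestrictedReach E W a b) :
    ∃ p : List V, p.Chain' E ∧ p.Nodup ∧ p.head? = some a ∧ p.getLast? = some b ∧
      ∀ x ∈ p, x ∈ W := by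
  induction h with
  | refl => exact ⟨[a], List.isChain_singleton _, by simp, by simp, by simp, by simpa using ha⟩
  | @tail b c _ hbc ih =>
    obtain ⟨p, hch, hnd, hhd, hlast, hW⟩ := ih
    obtain ⟨hE, hbW, hcW⟩ := hbc
    by_cases hcp : c ∈ p
    · refine ⟨p.take (p.idxOf c + 1), hch.take _, (List.take_sublist _ _).nodup hnd, ?_, ?_, ?_⟩
      · rw [List.head?_eq_getElem?, List.getElem?_take, if_pos (Nat.succ_pos _),
          ← List.head?_eq_getElem?]
        exact hhd
      · have hc' : p.idxOf c < p.length := List.idxOf_lt_length_iff.2 hcp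
        rw [List.getLast?_eq_getElem?]
        have hlen : (p.take (p.idxOf c + 1)).length = p.idxOf c + 1 := by
          simp [List.length_take]; omega
        rw [hlen]
        simp only [Nat.add_sub_cancel]
        rw [List.getElem?_take]
        simp [List.getElem?_eq_getElem hc', List.getElem_idxOf hc']
      · intro x hx; exact hW x (List.mem_of_mem_take hx)
    · have hpne : p ≠ [] := by
        intro h0; rw [h0] at hlast; simp at hlast
      refine ⟨p ++ [c], ?_, ?_, ?_, ?_, ?_⟩
      · show List.IsChain E (p ++ [c])
        rw [List.isChain_append]
        refine ⟨hch, by simp, ?_⟩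
        intro x hx y hy
        simp at hy; subst hy
        rw [hlast] at hx; simp at hx; subst hx
        exact hE
      · rw [List.nodup_append]
        exact ⟨hnd, by simp, by intro x hx y hy; simp at hy; subst hy; intro hxe; subst hxe; exact hcp hx⟩
      · rw [List.head?_append_of_ne_nil _ hpne]; exact hhd
      · exact List.getLast?_concat
      · intro x hx
        rcases List.mem_append.1 hx with h' | h'
        · exact hW x h'
        · simp at h'; subst h'; exact hcW

lemma reach_prefix {E : V → V → Prop} {p : List V} (hch : p.Chain' E) {a u : V}
    (ha : p.head? = some a) (hu : u ∈ p) :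
    RestrictedReach E {x | x ∈ p.take (p.idxOf u + 1)} a u := by
  have hu' : p.idxOf u < p.length := List.idxOf_lt_length_iff.2 hu
  refine chain_reach _ (hch.take _) ?_ ?_
  · rw [List.head?_eq_getElem?] at *
    rw [List.getElem?_take]; simp; exact ha
  · rw [List.getLast?_eq_getElem?]
    have hlen : (p.take (p.idxOf u + 1)).length = p.idxOf u + 1 := by
      simp [List.length_take]; omega
    rw [hlen]
    simp only [Nat.add_sub_cancel]
    rw [List.getElem?_take]
    simp [List.getElem?_eq_getElem hu', List.getElem_idxOf hu']

lemma reach_suffix {E : V → V → Prop} {p : List V} (hch : p.Chain' E) {u b : V}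
    (hu : u ∈ p) (hb : p.getLast? = some b) :
    RestrictedReach E {x | x ∈ p.drop (p.idxOf u)} u b := by
  have hu' : p.idxOf u < p.length := List.idxOf_lt_length_iff.2 hu
  refine chain_reach _ (hch.drop _) ?_ ?_
  · rw [List.head?_drop]
    simp [List.getElem?_eq_getElem hu', List.getElem_idxOf hu']
  · rw [List.getLast?_drop]
    simp [Nat.not_le.2 hu', hb]

lemma cycle_reach {E : V → V → Prop} {γ : List V} (h : IsCycle E γ) {u v : V}
    (hu : u ∈ γ) (hv : v ∈ γ) : RestrictedReach E {x | x ∈ γ} u v := by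
  obtain ⟨hch, hlen, hhl⟩ := h
  have hne : γ ≠ [] := by intro h0; rw [h0] at hlen; simp at hlen
  have ha : γ.head? = some (γ.head hne) := List.head?_eq_head hne
  have hlast : γ.getLast? = some (γ.head hne) := by rw [← hhl]; exact ha
  have r1 : RestrictedReach E {x | x ∈ γ} u (γ.head hne) :=
    rr_mono (fun z hz => List.mem_of_mem_drop hz) (reach_suffix hch hu hlast)
  have r2 : RestrictedReach E {x | x ∈ γ} (γ.head hne) v :=
    rr_mono (fun z hz => List.mem_of_mem_take hz) (reach_prefix hch ha hv)
  exact r1.trans r2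

namespace IONetwork

variable (G : IONetwork V)

lemma super_inp : G.SuperSimple G.inp := fun _ hp => mem_of_head? hp.2.1

lemma super_out : G.SuperSimple G.out := fun _ hp => mem_of_getLast? hp.2.2.1

/-- Master contradiction: a walk `ι → u → v → o` avoiding a super-simple node `c`. -/
lemma avoid_contra {p q : List V} (hp : G.IsIOSimplePath p) (hq : G.IsIOSimplePath q)
    {u v c : V} (hu : u ∈ p) (hv : v ∈ q) (hc : G.SuperSimple c)
    (hmid : RestrictedReach G.edge {z | z ≠ c} u v)
    (h1 : p.idxOf u < p.idxOf c) (h2 : q.idxOf c < q.idxOf v) : False := by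
  obtain ⟨hpch, hph, hpl, hpnd⟩ := hp
  obtain ⟨hqch, hqh, hql, hqnd⟩ := hq
  have hcp : c ∈ p := hc p ⟨hpch, hph, hpl, hpnd⟩
  have hcq : c ∈ q := hc q ⟨hqch, hqh, hql, hqnd⟩
  have leg1 : RestrictedReach G.edge {z | z ≠ c} G.inp u := by
    refine rr_mono ?_ (reach_prefix hpch hph hu)
    intro z hz hzc
    subst hzc
    exact not_mem_take hpnd hcp h1 hz
  have leg3 : RestrictedReach G.edge {z | z ≠ c} v G.out := by
    refine rr_mono ?_ (reach_suffix hqch hv hql)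
    intro z hz hzc
    subst hzc
    exact not_mem_drop hqnd hcq h2 hz
  have hic : G.inp ≠ c := by
    intro h0
    have : p.idxOf c = 0 := h0 ▸ indexOf_head hph
    omega
  obtain ⟨r, hrch, hrnd, hrh, hrl, hrW⟩ :=
    walk_to_path (show G.inp ∈ {z | z ≠ c} from hic) (leg1.trans (hmid.trans leg3))
  have : c ∈ r := hc r ⟨hrch, hrh, hrl, hrnd⟩
  exact hrW c this rfl

/-- Order invariance of super-simple nodes along ιo-simple paths. -/
lemma order_inv {x y : V} (hx : G.SuperSimple x) (hy : G.SuperSimple y)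
    {p q : List V} (hp : G.IsIOSimplePath p) (hq : G.IsIOSimplePath q)
    (h : p.idxOf x < p.idxOf y) : q.idxOf x < q.idxOf y := by
  have hxp : x ∈ p := hx p hp
  have hxq : x ∈ q := hx q hq
  have hyq : y ∈ q := hy q hq
  have hxy : x ≠ y := by intro h0; rw [h0] at h; omega
  have hne : q.idxOf x ≠ q.idxOf y := fun h0 => hxy (eq_of_indexOf_eq hxq hyq h0)
  by_contra h0
  have h2 : q.idxOf y < q.idxOf x := by omega
  exact G.avoid_contra hp hq hxp hxq hy Relation.ReflTransGen.refl h h2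

end IONetwork

/-- Picking the adjacent super-simple neighbors of a non-super-simple node on a simple
path. -/
lemma pick_neighbors {V : Type} [Fintype V] [DecidableEq V] (G : IONetwork V)
    {p : List V} (hp : G.IsIOSimplePath p) {u : V} (hu : u ∈ p)
    (hns : ¬ G.SuperSimple u) :
    ∃ a b : V, G.SuperSimple a ∧ G.SuperSimple b ∧ a ∈ p ∧ b ∈ p ∧
      p.idxOf a < p.idxOf u ∧ p.idxOf u < p.idxOf b ∧
      ∀ c, G.SuperSimple c → p.idxOf a < p.idxOf c → p.idxOf c < p.idxOf b →
        False := by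
  classical
  obtain ⟨hpch, hph, hpl, hpnd⟩ := hp
  have hp' : G.IsIOSimplePath p := ⟨hpch, hph, hpl, hpnd⟩
  have hu' : p.idxOf u < p.length := List.idxOf_lt_length_iff.2 hu
  have hip : G.inp ∈ p := mem_of_head? hph
  have hop : G.out ∈ p := mem_of_getLast? hpl
  have hiu : 0 < p.idxOf u := by
    rcases Nat.eq_zero_or_pos (p.idxOf u) with h0 | h0
    · exfalso
      have : u = G.inp := eq_of_indexOf_eq hu hip (by rw [indexOf_head hph, h0])
      exact hns (this ▸ G.super_inp)
    · exact h0
  have houidx : p.idxOf G.out = p.length - 1 := by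
    have hpne : p ≠ [] := fun h0 => by rw [h0] at hpl; simp at hpl
    have hlen : 0 < p.length := List.length_pos_iff.2 hpne
    have hl' : p.length - 1 < p.length := by omega
    have hgl : p[p.length - 1]'hl' = G.out := by
      rw [List.getLast?_eq_getElem?] at hpl
      have := List.getElem?_eq_getElem hl'
      rw [this] at hpl
      exact Option.some_injective _ hpl
    have ho' : p.idxOf G.out < p.length := List.idxOf_lt_length_iff.2 hop
    have hgo := List.getElem_idxOf ho'
    have heq : p[p.idxOf G.out]'ho' = p[p.length - 1]'hl' := by rw [hgo, hgl]
    exact (List.Nodup.getElem_inj_iff hpnd).1 heq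
  have huo : p.idxOf u < p.idxOf G.out := by
    have hne : p.idxOf u ≠ p.idxOf G.out := fun h0 =>
      hns ((eq_of_indexOf_eq hu hop h0) ▸ G.super_out)
    omega
  set T : Finset V := Finset.univ.filter
    (fun w => G.SuperSimple w ∧ p.idxOf w < p.idxOf u) with hT
  set T' : Finset V := Finset.univ.filter
    (fun w => G.SuperSimple w ∧ p.idxOf u < p.idxOf w) with hT'
  have hTne : T.Nonempty :=
    ⟨G.inp, by simp [hT, G.super_inp, indexOf_head hph, hiu]⟩
  have hT'ne : T'.Nonempty := ⟨G.out, by simp [hT', G.super_out, huo]⟩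
  obtain ⟨a, haT, hamax⟩ := Finset.exists_max_image T (fun w => p.idxOf w) hTne
  obtain ⟨b, hbT, hbmin⟩ := Finset.exists_min_image T' (fun w => p.idxOf w) hT'ne
  simp only [hT, Finset.mem_filter, Finset.mem_univ, true_and] at haT
  simp only [hT', Finset.mem_filter, Finset.mem_univ, true_and] at hbT
  have hap : a ∈ p := List.idxOf_lt_length_iff.1 (lt_trans haT.2 hu')
  have hbp : b ∈ p := by
    have : p.idxOf b ≤ p.idxOf G.out :=
      hbmin G.out (by simp [hT', G.super_out, huo])
    exact List.idxOf_lt_length_iff.1 (by omega)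
  refine ⟨a, b, haT.1, hbT.1, hap, hbp, haT.2, hbT.2, ?_⟩
  intro c hc h1 h2
  have hcp : c ∈ p := by
    have hb' : p.idxOf b < p.length := List.idxOf_lt_length_iff.2 hbp
    exact List.idxOf_lt_length_iff.1 (by omega)
  rcases lt_trichotomy (p.idxOf c) (p.idxOf u) with h | h | h
  · have : p.idxOf c ≤ p.idxOf a := by
      have := hamax c (by simp [hT, hc, h]); simpa using this
    omega
  · exact hns ((eq_of_indexOf_eq hcp hu h) ▸ hc)
  · have : p.idxOf b ≤ p.idxOf c := by
      have := hbmin c (by simp [hT', hc, h]); simpa using this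
    omega

end Stmt11Helpers

/-- Lemma 6.3 (d).  Let `B` be an appendage path component violating
the no-cycle condition, `S` an ιo-simple path, and `γ` a cycle lying in the
complementary subnetwork `C_S` containing a node of `B` and a node of `C_S ∖ B`.
Then `γ` contains no super-simple node (so every simple node of `γ` is not
super-simple), and all simple nodes of `γ` belong to the super-simple subnetwork
`L(a,b)` of a single pair `(a,b)` of adjacent super-simple nodes. -/
theorem stmt_11 {V : Type} [Fintype V] [DecidableEq V] (G : IONetwork V)
    (hcore : G.IsCore) (B : Set V)
    (hB : G.IsAppendagePathComponent B) (hviol : ¬ G.NoCycleCond B)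
    (S : List V) (hS : G.IsIOSimplePath S)
    (γ : List V) (hγ : IsCycle G.edge γ) (hγS : ∀ v ∈ γ, v ∉ S)
    (hγB : ∃ v ∈ γ, v ∈ B) (hγB' : ∃ v ∈ γ, v ∉ B) :
    (∀ v ∈ γ, ¬ G.SuperSimple v) ∧
    (∀ v ∈ γ, G.SimpleNode v → ¬ G.SuperSimple v) ∧
    ∃ a b : V, G.SSAdjacent a b ∧ ∀ v ∈ γ, G.SimpleNode v → G.InL a b v := by
  classical
  -- no node of γ is super-simple
  have hnosup : ∀ v ∈ γ, ¬ G.SuperSimple v := fun v hv hsv => hγS v hv (hsv S hS)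
  refine ⟨hnosup, fun v hv _ => hnosup v hv, ?_⟩
  -- γ contains a simple node
  have hsimp_ex : ∃ u ∈ γ, G.SimpleNode u := by
    by_contra h
    push_neg at h
    obtain ⟨x, hxγ, hxB⟩ := hγB
    obtain ⟨w, hwγ, hwB⟩ := hγB'
    have hsub : {z | z ∈ γ} ⊆ {z | ¬ G.SimpleNode z} := fun z hz => h z hz
    have r1 := rr_mono hsub (cycle_reach hγ hxγ hwγ)
    have r2 := rr_mono hsub (cycle_reach hγ hwγ hxγ)
    exact hwB (hB.2.2.2 w (h w hwγ) ⟨x, hxB, r1, r2⟩)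
  obtain ⟨u, huγ, hus⟩ := hsimp_ex
  obtain ⟨p, hp, hup⟩ := hus
  obtain ⟨a, b, ha, hb, hap, hbp, hau, hub, hbet⟩ :=
    pick_neighbors G hp hup (hnosup u huγ)
  -- mid-reaches along γ avoiding any super-simple node
  have hmidset : ∀ c : V, G.SuperSimple c → {x | x ∈ γ} ⊆ {z | z ≠ c} := by
    intro c hc x hx hxc
    subst hxc
    exact hnosup x hx hc
  have muv : ∀ w ∈ γ, ∀ c, G.SuperSimple c →
      RestrictedReach G.edge {z | z ≠ c} u w :=
    fun w hw c hc => rr_mono (hmidset c hc) (cycle_reach hγ huγ hw)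
  have mvu : ∀ w ∈ γ, ∀ c, G.SuperSimple c →
      RestrictedReach G.edge {z | z ≠ c} w u :=
    fun w hw c hc => rr_mono (hmidset c hc) (cycle_reach hγ hw huγ)
  -- adjacency of (a, b)
  have hanb : a ≠ b := by
    intro h0
    rw [h0] at hau
    omega
  have hadj : G.SSAdjacent a b := by
    refine ⟨ha, hb, hanb, ?_, ?_⟩
    · intro r hr
      exact ⟨ha r hr, hb r hr, G.order_inv ha hb hp hr (lt_trans hau hub)⟩
    · rintro c hc r hr ⟨⟨_, _, h1⟩, ⟨_, _, h2⟩⟩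
      exact hbet c hc (G.order_inv ha hc hr hp h1) (G.order_inv hc hb hr hp h2)
  refine ⟨a, b, hadj, ?_⟩
  intro v hvγ hvs
  obtain ⟨q, hq, hvq⟩ := hvs
  obtain ⟨a', b', ha', hb', ha'q, hb'q, ha'v, hvb', hbet'⟩ :=
    pick_neighbors G hq hvq (hnosup v hvγ)
  have hvns : ¬ G.SuperSimple v := hnosup v hvγ
  have huns : ¬ G.SuperSimple u := hnosup u huγ
  -- b = b'
  have hbb : b = b' := by
    by_contra hne
    have hbq : b ∈ q := hb q hq
    have hb'p : b' ∈ p := hb' p hp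
    rcases lt_trichotomy (q.idxOf b) (q.idxOf b') with h | h | h
    · -- b strictly before b' on q; show b before v on q
      have hbv : q.idxOf b < q.idxOf v := by
        have hne2 : q.idxOf b ≠ q.idxOf v :=
          fun h0 => hvns ((eq_of_indexOf_eq hbq hvq h0).symm ▸ hb)
        by_contra h0
        have h3 : q.idxOf v < q.idxOf b := by omega
        exact hbet' b hb (lt_trans ha'v h3) h
      exact G.avoid_contra hp hq hup hvq hb (muv v hvγ b hb) hub hbv
    · exact hne (eq_of_indexOf_eq hbq hb'q h)
    · -- b' strictly before b on q, hence on p; show b' before u on p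
      have hb'p_lt : p.idxOf b' < p.idxOf b := G.order_inv hb' hb hq hp h
      have hb'u : p.idxOf b' < p.idxOf u := by
        have hne2 : p.idxOf b' ≠ p.idxOf u :=
          fun h0 => huns ((eq_of_indexOf_eq hb'p hup h0).symm ▸ hb')
        by_contra h0
        have h3 : p.idxOf u < p.idxOf b' := by omega
        exact hbet b' hb' (lt_trans hau h3) hb'p_lt
      exact G.avoid_contra hq hp hvq hup hb' (mvu v hvγ b' hb') hvb' hb'u
  -- a = a'
  have haa : a = a' := by
    by_contra hne
    have haq : a ∈ q := ha q hq
    have ha'p : a' ∈ p := ha' p hp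
    rcases lt_trichotomy (p.idxOf a) (p.idxOf a') with h | h | h
    · -- a before a' on p; show u before a' on p
      have hua' : p.idxOf u < p.idxOf a' := by
        have hne2 : p.idxOf a' ≠ p.idxOf u :=
          fun h0 => huns ((eq_of_indexOf_eq ha'p hup h0).symm ▸ ha')
        by_contra h0
        have h3 : p.idxOf a' < p.idxOf u := by omega
        exact hbet a' ha' h (lt_trans h3 hub)
      exact G.avoid_contra hp hq hup hvq ha' (muv v hvγ a' ha') hua' ha'v
    · exact hne (eq_of_indexOf_eq (ha p hp) ha'p h)
    · -- a' before a on p, hence on q; show v before a on q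
      have ha'a_q : q.idxOf a' < q.idxOf a := G.order_inv ha' ha hp hq h
      have hva : q.idxOf v < q.idxOf a := by
        have hne2 : q.idxOf a ≠ q.idxOf v :=
          fun h0 => hvns ((eq_of_indexOf_eq haq hvq h0).symm ▸ ha)
        by_contra h0
        have h3 : q.idxOf a < q.idxOf v := by omega
        exact hbet' a ha ha'a_q (lt_trans h3 hvb')
      exact G.avoid_contra hq hp hvq hup ha (mvu v hvγ a ha) hva hau
  -- conclude: v ∈ L(a, b)
  refine Or.inr (Or.inr ⟨q, hq, ⟨haa ▸ ha'q, hvq, haa ▸ ha'v⟩, ⟨hvq, hbb ▸ hb'q, hbb ▸ hvb'⟩⟩)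
end

section
/- Let R be a commutative ring, and let I = {ι} ⊔ Σ ⊔ U ⊔ D ⊔ {o} be a finite index set partitioned into the singleton ι, sets Σ, U, D, and the singleton o. Let J be an I × I matrix over R (rows indexed by target, columns by source) satisfying: J d a = 0 for all d ∈ D and all a ∉ D (no arrows into D from outside D), and J b u = 0 for all u ∈ U and all b ∈ {ι} ∪ Σ ∪ {o} (no arrows from U to ι, Σ, or o). Let H be the matrix obtained from J by deleting the row indexed by ι and the column indexed by o, and let H_c be the (Σ ∪ {o}) × ({ι} ∪ Σ) matrix of corresponding entries of J. Then det(H) = ± det(J_{UU}) · det(J_{DD}) · det(H_c), where J_{UU} and J_{DD} are the principal submatrices of J indexed by U and D respectively. -/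
open Classical MvPolynomial

/-- determinant identity underlying Theorem 2.3, core reduction.
For an index set partitioned as `{ι} ⊔ S ⊔ U ⊔ D ⊔ {o}` and a Jacobian `J` with no
arrows into `D` from outside `D` and no arrows from `U` into `{ι} ∪ S ∪ {o}`, the
determinant of the homeostasis matrix `H` (delete row `ι`, column `o`) equals, up to
sign, `det J_{UU} · det J_{DD} · det H_c`, where `H_c` is the homeostasis matrix of the
core part on `{ι} ∪ S ∪ {o}`. -/
theorem stmt_13 {I : Type} [Fintype I] [DecidableEq I] {R : Type*} [CommRing R]
    (ι o : I) (hιo : ι ≠ o) (S U D : Set I)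
    (hcover : ∀ v : I, v = ι ∨ v = o ∨ v ∈ S ∨ v ∈ U ∨ v ∈ D)
    (hι : ι ∉ S ∧ ι ∉ U ∧ ι ∉ D) (ho : o ∉ S ∧ o ∉ U ∧ o ∉ D)
    (hSU : Disjoint S U) (hSD : Disjoint S D) (hUD : Disjoint U D)
    (J : Matrix I I R)
    (hD : ∀ d ∈ D, ∀ a : I, a ∉ D → J d a = 0)
    (hU : ∀ u ∈ U, ∀ b : I, (b = ι ∨ b ∈ S ∨ b = o) → J b u = 0)
    (e : {v : I // v ≠ o} ≃ {v : I // v ≠ ι})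
    (ec : {v : I // v = ι ∨ v ∈ S} ≃ {v : I // v ∈ S ∨ v = o}) :
    Matrix.det (Matrix.of fun r c : {v : I // v ≠ o} => J (e r).1 c.1) =
      Matrix.det (Matrix.of fun i j : ↥U => J i.1 j.1) *
      Matrix.det (Matrix.of fun i j : ↥D => J i.1 j.1) *
      Matrix.det (Matrix.of fun r c : {v : I // v = ι ∨ v ∈ S} => J (ec r).1 c.1) ∨
    Matrix.det (Matrix.of fun r c : {v : I // v ≠ o} => J (e r).1 c.1) =
      -(Matrix.det (Matrix.of fun i j : ↥U => J i.1 j.1) *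
        Matrix.det (Matrix.of fun i j : ↥D => J i.1 j.1) *
        Matrix.det (Matrix.of fun r c : {v : I // v = ι ∨ v ∈ S} => J (ec r).1 c.1)) := by
  classical
  obtain ⟨hιS, hιU, hιD⟩ := hι
  obtain ⟨hoS, hoU, hoD⟩ := ho
  let A' : Type := {v : I // v = ι ∨ v ∈ S}
  let A : Type := {v : I // v ∈ S ∨ v = o}
  let nodeC : (A' ⊕ ↥U) ⊕ ↥D → I :=
    Sum.elim (Sum.elim Subtype.val Subtype.val) Subtype.val
  let nodeR : (A ⊕ ↥U) ⊕ ↥D → I :=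
    Sum.elim (Sum.elim Subtype.val Subtype.val) Subtype.val
  have memD : ∀ v : I, v ≠ o → ¬(v = ι ∨ v ∈ S) → v ∉ U → v ∈ D := by
    intro v hvo hv hvU
    rcases hcover v with h|h|h|h|h
    · exact absurd (Or.inl h) hv
    · exact absurd h hvo
    · exact absurd (Or.inr h) hv
    · exact absurd h hvU
    · exact h
  have memD' : ∀ v : I, v ≠ ι → ¬(v ∈ S ∨ v = o) → v ∉ U → v ∈ D := by
    intro v hvι hv hvU
    rcases hcover v with h|h|h|h|h
    · exact absurd h hvι
    · exact absurd (Or.inr h) hv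
    · exact absurd (Or.inl h) hv
    · exact absurd h hvU
    · exact h
  let g : {v : I // v ≠ o} ≃ (A' ⊕ ↥U) ⊕ ↥D :=
  { toFun := fun v =>
      if h1 : v.1 = ι ∨ v.1 ∈ S then Sum.inl (Sum.inl ⟨v.1, h1⟩)
      else if h2 : v.1 ∈ U then Sum.inl (Sum.inr ⟨v.1, h2⟩)
      else Sum.inr ⟨v.1, memD v.1 v.2 h1 h2⟩
    invFun := fun x => ⟨nodeC x, by
      rcases x with (a | u) | d
      · show a.1 ≠ o
        rcases a.2 with h | h
        · rw [h]; exact hιo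
        · exact fun he => hoS (he ▸ h)
      · show u.1 ≠ o
        exact fun he => hoU (he ▸ u.2)
      · show d.1 ≠ o
        exact fun he => hoD (he ▸ d.2)⟩
    left_inv := fun v => by
      by_cases h1 : v.1 = ι ∨ v.1 ∈ S
      · simp [h1, nodeC]
      · by_cases h2 : v.1 ∈ U
        · simp [h1, h2, nodeC]
        · simp [h1, h2, nodeC]
    right_inv := fun x => by
      rcases x with (a | u) | d
      · simp [nodeC, a.2]
      · have h1 : ¬(u.1 = ι ∨ u.1 ∈ S) := by
          rintro (h | h)
          · exact hιU (h ▸ u.2)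
          · exact Set.disjoint_left.mp hSU h u.2
        simp [nodeC, h1, u.2]
      · have h1 : ¬(d.1 = ι ∨ d.1 ∈ S) := by
          rintro (h | h)
          · exact hιD (h ▸ d.2)
          · exact Set.disjoint_left.mp hSD h d.2
        have h2 : d.1 ∉ U := Set.disjoint_right.mp hUD d.2
        simp [nodeC, h1, h2] }
  let hr : {v : I // v ≠ ι} ≃ (A ⊕ ↥U) ⊕ ↥D :=
  { toFun := fun v =>
      if h1 : v.1 ∈ S ∨ v.1 = o then Sum.inl (Sum.inl ⟨v.1, h1⟩)
      else if h2 : v.1 ∈ U then Sum.inl (Sum.inr ⟨v.1, h2⟩)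
      else Sum.inr ⟨v.1, memD' v.1 v.2 h1 h2⟩
    invFun := fun x => ⟨nodeR x, by
      rcases x with (a | u) | d
      · show a.1 ≠ ι
        rcases a.2 with h | h
        · exact fun he => hιS (he ▸ h)
        · exact fun he => hιo (he.symm.trans h)
      · show u.1 ≠ ι
        exact fun he => hιU (he ▸ u.2)
      · show d.1 ≠ ι
        exact fun he => hιD (he ▸ d.2)⟩
    left_inv := fun v => by
      by_cases h1 : v.1 ∈ S ∨ v.1 = o
      · simp [h1, nodeR]
      · by_cases h2 : v.1 ∈ U
        · simp [h1, h2, nodeR]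
        · simp [h1, h2, nodeR]
    right_inv := fun x => by
      rcases x with (a | u) | d
      · simp [nodeR, a.2]
      · have h1 : ¬(u.1 ∈ S ∨ u.1 = o) := by
          rintro (h | h)
          · exact Set.disjoint_left.mp hSU h u.2
          · exact hoU (h ▸ u.2)
        simp [nodeR, h1, u.2]
      · have h1 : ¬(d.1 ∈ S ∨ d.1 = o) := by
          rintro (h | h)
          · exact Set.disjoint_left.mp hSD h d.2
          · exact hoD (h ▸ d.2)
        have h2 : d.1 ∉ U := Set.disjoint_right.mp hUD d.2
        simp [nodeR, h1, h2] }
  let t : (A' ⊕ ↥U) ⊕ ↥D ≃ (A ⊕ ↥U) ⊕ ↥D :=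
    (ec.sumCongr (Equiv.refl ↥U)).sumCongr (Equiv.refl ↥D)
  let f : {v : I // v ≠ o} ≃ {v : I // v ≠ ι} := (g.trans t).trans hr.symm
  let σ : Equiv.Perm {v : I // v ≠ o} := e.trans f.symm
  let M : Matrix ((A' ⊕ ↥U) ⊕ ↥D) ((A' ⊕ ↥U) ⊕ ↥D) R :=
    fun r c => J (nodeR (t r)) (nodeC c)
  have key1 : (Matrix.of fun r c : {v : I // v ≠ o} => J (e r).1 c.1)
      = ((Matrix.of fun r c : {v : I // v ≠ o} => J (f r).1 c.1).submatrix σ id) := by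
    ext r c
    have : f (σ r) = e r := by simp [σ]
    simp [Matrix.submatrix_apply, this]
  have key2 : (Matrix.of fun r c : {v : I // v ≠ o} => J (f r).1 c.1)
      = M.submatrix g g := by
    ext r c
    show J (f r).1 c.1 = J (nodeR (t (g r))) (nodeC (g c))
    congr 1
    have : nodeC (g c) = (g.symm (g c)).1 := rfl
    rw [this, g.symm_apply_apply]
  let P : Matrix (A' ⊕ ↥U) (A' ⊕ ↥U) R := fun r c => M (Sum.inl r) (Sum.inl c)
  let Q : Matrix (A' ⊕ ↥U) ↥D R := fun r c => M (Sum.inl r) (Sum.inr c)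
  let W : Matrix ↥D ↥D R := fun r c => M (Sum.inr r) (Sum.inr c)
  have hM : M = Matrix.fromBlocks P Q 0 W := by
    ext r c
    rcases r with r | r <;> rcases c with c | c
    · rfl
    · rfl
    · show J r.1 (nodeC (Sum.inl c)) = 0
      apply hD r.1 r.2
      rcases c with a | u
      · show a.1 ∉ D
        rcases a.2 with h | h
        · rw [h]; exact hιD
        · exact fun hd => Set.disjoint_left.mp hSD h hd
      · exact fun hd => Set.disjoint_left.mp hUD u.2 hd
    · rfl
  let P11 : Matrix A' A' R := fun r c => P (Sum.inl r) (Sum.inl c)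
  let P21 : Matrix ↥U A' R := fun r c => P (Sum.inr r) (Sum.inl c)
  let P22 : Matrix ↥U ↥U R := fun r c => P (Sum.inr r) (Sum.inr c)
  have hP : P = Matrix.fromBlocks P11 0 P21 P22 := by
    ext r c
    rcases r with a | u <;> rcases c with c | c
    · rfl
    · show J (ec a).1 c.1 = 0
      apply hU c.1 c.2
      rcases (ec a).2 with h | h
      · exact Or.inr (Or.inl h)
      · exact Or.inr (Or.inr h)
    · rfl
    · rfl
  have hP11 : P11 = (Matrix.of fun r c : A' => J (ec r).1 c.1) := rfl
  have hP22 : P22 = (Matrix.of fun i j : ↥U => J i.1 j.1) := rfl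
  have hW : W = (Matrix.of fun i j : ↥D => J i.1 j.1) := rfl
  have hdet : (Matrix.of fun r c : {v : I // v ≠ o} => J (e r).1 c.1).det
      = ((Equiv.Perm.sign σ : ℤ) : R) *
        ((Matrix.of fun r c : A' => J (ec r).1 c.1).det *
         (Matrix.of fun i j : ↥U => J i.1 j.1).det *
         (Matrix.of fun i j : ↥D => J i.1 j.1).det) := by
    rw [key1, Matrix.det_permute, key2, Matrix.det_submatrix_equiv_self, hM,
      Matrix.det_fromBlocks_zero₂₁, hP, Matrix.det_fromBlocks_zero₁₂,
      hP11, hP22, hW]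
  rcases Int.units_eq_one_or (Equiv.Perm.sign σ) with h | h
  · left
    rw [hdet, h]
    push_cast
    ring
  · right
    rw [hdet, h]
    push_cast
    ring
end
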